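/- arXiv:2002.10335 — 8 statements merged into one kernel-verified Lean document; each statement's English description precedes it below -/
import Mathlib

section
/- Every simple move M can be written as M = ∑_{i=1}^k δ_{x_i} ⊗ δ_{y_i} − ∑_{i=1}^k δ_{x_i} ⊗ δ_{y_{σ(i)}}, where (x_i, y_i), i = 1,…,k, is any enumeration of the set {M = +1} and σ is some permutation of {1,…,k}. -/
open Finset

/-- For a `{-1,0,1}`-valued function summing to zero, the number of `+1`s equals the
number of `-1`s. -/
lemma simple_move_aux_card {X : Type*} [Fintype X] (f : X → ℝ)
    (hf : ∀ x, f x = -1 ∨ f x = 0 ∨ f x = 1) (h : ∑ x, f x = 0) :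
    Fintype.card {x // f x = 1} = Fintype.card {x // f x = -1} := by
  classical
  have key : ∀ x, f x = (if f x = 1 then (1:ℝ) else 0) - (if f x = -1 then (1:ℝ) else 0) := by
    intro x
    rcases hf x with h1 | h1 | h1 <;> rw [h1] <;> norm_num
  have hsum : (((univ : Finset X).filter (fun x => f x = 1)).card : ℝ) =
      (((univ : Finset X).filter (fun x => f x = -1)).card : ℝ) := by
    have := h
    rw [Finset.sum_congr rfl (fun x _ => key x), Finset.sum_sub_distrib] at this
    rw [Finset.sum_boole, Finset.sum_boole] at this
    linarith
  have hnat : ((univ : Finset X).filter (fun x => f x = 1)).card =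
      ((univ : Finset X).filter (fun x => f x = -1)).card := by
    exact_mod_cast hsum
  simpa [Fintype.card_subtype] using hnat

/-- Sum of the indicator of `p.1 = (a,b)` over the subtype `{p // M p.1 p.2 = c}`. -/
lemma simple_move_aux_sum {X : Type*} [Fintype X] [DecidableEq X] (M : X → X → ℝ) (c : ℝ)
    (a b : X) :
    ∑ p : {p : X × X // M p.1 p.2 = c}, (if p.1 = (a, b) then (1:ℝ) else 0) =
      if M a b = c then 1 else 0 := by
  classical
  by_cases h : M a b = c
  · rw [if_pos h]
    have : ∀ p : {p : X × X // M p.1 p.2 = c},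
        (if p.1 = (a, b) then (1:ℝ) else 0) = (if p = ⟨(a, b), h⟩ then (1:ℝ) else 0) := by
      intro p
      congr 1
      simp [Subtype.ext_iff]
    rw [Finset.sum_congr rfl (fun p _ => this p)]
    simp
  · rw [if_neg h]
    apply Finset.sum_eq_zero
    intro p _
    rw [if_neg]
    intro hp
    apply h
    have h2 := p.2
    rw [hp] at h2
    exact h2

/-- Every simple move `M` can be written, for any enumeration `(x_i,y_i)` of the
set `{M = +1}`, as `∑ δ_{x_i} ⊗ δ_{y_i} − ∑ δ_{x_i} ⊗ δ_{y_{σ(i)}}` for some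
permutation `σ`. -/
theorem simple_move_eq_permutation_form
    {X : Type*} [Fintype X] [DecidableEq X] (M : X → X → ℝ)
    (hval : ∀ x y, M x y = -1 ∨ M x y = 0 ∨ M x y = 1)
    (hrow : ∀ x, ∑ y, M x y = 0) (hcol : ∀ y, ∑ x, M x y = 0)
    (k : ℕ) (e : Fin k ≃ {p : X × X // M p.1 p.2 = 1}) :
    ∃ σ : Equiv.Perm (Fin k), ∀ a b,
      M a b = ∑ i, ((if a = (e i).1.1 ∧ b = (e i).1.2 then (1:ℝ) else 0) -
        (if a = (e i).1.1 ∧ b = (e (σ i)).1.2 then (1:ℝ) else 0)) := by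
  classical
  -- row cardinality equality
  have hrowc : ∀ x : X, Fintype.card {y // M x y = 1} = Fintype.card {y // M x y = -1} :=
    fun x => simple_move_aux_card (M x) (hval x) (hrow x)
  have hcolc : ∀ y : X, Fintype.card {x // M x y = 1} = Fintype.card {x // M x y = -1} :=
    fun y => simple_move_aux_card (fun x => M x y) (fun x => hval x y) (hcol y)
  -- step 1: row-preserving bijection φ : {M = 1} ≃ {M = -1}
  have fibrow : ∀ x : X,
      {p : {p : X × X // M p.1 p.2 = 1} // p.1.1 = x} ≃
      {p : {p : X × X // M p.1 p.2 = -1} // p.1.1 = x} := by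
    intro x
    have e1 : ∀ c : ℝ, {p : {p : X × X // M p.1 p.2 = c} // p.1.1 = x} ≃ {y // M x y = c} := by
      intro c
      refine ⟨fun q => ⟨q.1.1.2, by have h2 := q.1.2; rw [q.2] at h2; exact h2⟩,
        fun y => ⟨⟨(x, y.1), y.2⟩, rfl⟩, ?_, ?_⟩
      · rintro ⟨⟨⟨u, v⟩, h1⟩, h2⟩
        simp only at h2
        subst h2
        rfl
      · rintro ⟨y, hy⟩
        rfl
    exact (e1 1).trans ((Fintype.equivOfCardEq (hrowc x)).trans (e1 (-1)).symm)
  let φ : {p : X × X // M p.1 p.2 = 1} ≃ {p : X × X // M p.1 p.2 = -1} :=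
    Equiv.ofFiberEquiv fibrow
  have hφ : ∀ p, (φ p).1.1 = p.1.1 := fun p => Equiv.ofFiberEquiv_map fibrow p
  -- column fiber equivalences
  have e2 : ∀ (c : ℝ) (y : X),
      {p : {p : X × X // M p.1 p.2 = c} // p.1.2 = y} ≃ {x // M x y = c} := by
    intro c y
    refine ⟨fun q => ⟨q.1.1.1, by have h2 := q.1.2; rw [q.2] at h2; exact h2⟩,
      fun x => ⟨⟨(x.1, y), x.2⟩, rfl⟩, ?_, ?_⟩
    · rintro ⟨⟨⟨u, v⟩, h1⟩, h2⟩
      simp only at h2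
      subst h2
      rfl
    · rintro ⟨x, hx⟩
      rfl
  have fibcol : ∀ y : X,
      {i : Fin k // (φ (e i)).1.2 = y} ≃ {j : Fin k // (e j).1.2 = y} := by
    intro y
    have a1 : {i : Fin k // (φ (e i)).1.2 = y} ≃
        {q : {p : X × X // M p.1 p.2 = -1} // q.1.2 = y} :=
      (e.trans φ).subtypeEquiv (fun i => Iff.rfl)
    have a2 : {j : Fin k // (e j).1.2 = y} ≃
        {q : {p : X × X // M p.1 p.2 = 1} // q.1.2 = y} :=
      e.subtypeEquiv (fun j => Iff.rfl)
    exact (a1.trans (e2 (-1) y)).trans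
      ((Fintype.equivOfCardEq (hcolc y)).symm.trans ((e2 1 y).symm.trans a2.symm))
  let σ : Equiv.Perm (Fin k) := Equiv.ofFiberEquiv fibcol
  have hσ : ∀ i, (e (σ i)).1.2 = (φ (e i)).1.2 := fun i => Equiv.ofFiberEquiv_map fibcol i
  refine ⟨σ, fun a b => ?_⟩
  have h1 : ∀ i : Fin k, (if a = (e i).1.1 ∧ b = (e i).1.2 then (1:ℝ) else 0) =
      (if (e i).1 = (a, b) then (1:ℝ) else 0) := by
    intro i
    refine if_congr ?_ rfl rfl
    rw [Prod.ext_iff]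
    constructor <;> exact fun ⟨h, h'⟩ => ⟨h.symm, h'.symm⟩
  have h2 : ∀ i : Fin k, (if a = (e i).1.1 ∧ b = (e (σ i)).1.2 then (1:ℝ) else 0) =
      (if ((e.trans φ) i).1 = (a, b) then (1:ℝ) else 0) := by
    intro i
    refine if_congr ?_ rfl rfl
    rw [Prod.ext_iff]
    simp only [Equiv.trans_apply, hφ (e i), hσ i]
    constructor <;> exact fun ⟨h, h'⟩ => ⟨h.symm, h'.symm⟩
  calc M a b = (if M a b = 1 then (1:ℝ) else 0) - (if M a b = -1 then (1:ℝ) else 0) := by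
        rcases hval a b with h | h | h <;> rw [h] <;> norm_num
    _ = ∑ i, (if (e i).1 = (a, b) then (1:ℝ) else 0) -
        ∑ i, (if ((e.trans φ) i).1 = (a, b) then (1:ℝ) else 0) := by
        rw [Equiv.sum_comp e (fun p => if p.1 = (a, b) then (1:ℝ) else 0),
          Equiv.sum_comp (e.trans φ) (fun p => if p.1 = (a, b) then (1:ℝ) else 0),
          simple_move_aux_sum M 1 a b, simple_move_aux_sum M (-1) a b]
    _ = ∑ i, ((if a = (e i).1.1 ∧ b = (e i).1.2 then (1:ℝ) else 0) -
        (if a = (e i).1.1 ∧ b = (e (σ i)).1.2 then (1:ℝ) else 0)) := by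
        rw [Finset.sum_sub_distrib]
        congr 1 <;> apply Finset.sum_congr rfl <;> intro i _
        · exact (h1 i).symm
        · exact (h2 i).symm
end

section
/- A subset G ⊆ X × X is c-cyclically monotone if and only if every simple move M with {M > 0} ⊆ G has nonpositive c-cost c(M) = ∑_{x,y} c(x,y) M(x,y). -/
/-- `G` is cyclically monotone for the cost `c`. -/
def CyclicallyMonotone {X : Type*} (c : X → X → ℝ) (G : Set (X × X)) : Prop :=
  ∀ (k : ℕ) (f : Fin k → X × X), (∀ i, f i ∈ G) →
    ∀ σ : Equiv.Perm (Fin k), ∑ i, c (f i).1 (f i).2 ≤ ∑ i, c (f i).1 (f (σ i)).2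

section Aux

open Finset

lemma telescope' (F : ℕ → ℤ) (a b : ℕ) (hab : a ≤ b) :
    ∑ i ∈ Ico a b, (F i - F (i+1)) = F a - F b := by
  induction b with
  | zero => interval_cases a; simp
  | succ b ih =>
    rcases Nat.lt_or_ge a (b+1) with h | h
    · have hab' : a ≤ b := Nat.lt_succ_iff.mp h
      rw [Finset.sum_Ico_succ_top hab', ih hab']; ring
    · have : a = b + 1 := le_antisymm hab h
      subst this; simp

lemma exists_pos_of_sum_zero' {ι : Type*} [Fintype ι] (f : ι → ℤ)
    (h0 : ∑ i, f i = 0) {i0 : ι} (hi0 : f i0 < 0) : ∃ i, 0 < f i := by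
  by_contra hc
  push_neg at hc
  have : ∑ i, f i < ∑ i : ι, (0:ℤ) :=
    Finset.sum_lt_sum (fun i _ => hc i) ⟨i0, Finset.mem_univ _, hi0⟩
  simp [h0] at this

variable {X : Type*} [Fintype X]

lemma extract_simple_move (D : X → X → ℤ) (hrow : ∀ x, ∑ y, D x y = 0)
    (hcol : ∀ y, ∑ x, D x y = 0) (hne : ∃ x y, D x y ≠ 0) :
    ∃ M : X → X → ℤ,
      (∀ x y, M x y = -1 ∨ M x y = 0 ∨ M x y = 1) ∧
      (∀ x, ∑ y, M x y = 0) ∧ (∀ y, ∑ x, M x y = 0) ∧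
      (∀ x y, M x y = 1 → 0 < D x y) ∧
      (∀ x y, M x y = -1 → D x y < 0) ∧
      (∃ x y, M x y ≠ 0) := by
  classical
  set S : Set X := {x | ∃ y, 0 < D x y} with hS
  have hS0 : ∃ x, x ∈ S := by
    obtain ⟨x, y, hxy⟩ := hne
    rcases lt_or_gt_of_ne hxy with h | h
    · exact ⟨x, exists_pos_of_sum_zero' (D x) (hrow x) h⟩
    · exact ⟨x, y, h⟩
  obtain ⟨x0, hx0⟩ := hS0
  have hpick : ∀ x, ∃ y, x ∈ S → 0 < D x y := by
    intro x
    by_cases hx : x ∈ S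
    · obtain ⟨y, hy⟩ := hx; exact ⟨y, fun _ => hy⟩
    · exact ⟨x0, fun h => absurd h hx⟩
  choose h hh using hpick
  have gpick : ∀ x, ∃ x', x ∈ S → D x' (h x) < 0 ∧ x' ∈ S := by
    intro x
    by_cases hx : x ∈ S
    · obtain ⟨x', hx'⟩ := exists_pos_of_sum_zero' (fun x' => - D x' (h x))
        (by simpa using hcol (h x)) (i0 := x) (by simpa using hh x hx)
      have hx'neg : D x' (h x) < 0 := by omega
      refine ⟨x', fun _ => ⟨hx'neg, exists_pos_of_sum_zero' (D x') (hrow x') hx'neg⟩⟩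
    · exact ⟨x0, fun h => absurd h hx⟩
  choose g hg using gpick
  set seq : ℕ → X := fun n => g^[n] x0 with hseq
  have hseqS : ∀ n, seq n ∈ S := by
    intro n
    induction n with
    | zero => simpa [hseq]
    | succ n ih =>
      have : seq (n+1) = g (seq n) := by
        simp [hseq, Function.iterate_succ_apply']
      rw [this]; exact (hg _ ih).2
  have hDpos : ∀ n, 0 < D (seq n) (h (seq n)) := fun n => hh _ (hseqS n)
  have hDneg : ∀ n, D (seq (n+1)) (h (seq n)) < 0 := by
    intro n
    have : seq (n+1) = g (seq n) := by simp [hseq, Function.iterate_succ_apply']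
    rw [this]; exact (hg _ (hseqS n)).1
  have hrep : ∃ b, ∃ a, a < b ∧ seq a = seq b := by
    obtain ⟨i, j, hij, hfij⟩ :=
      Fintype.exists_ne_map_eq_of_card_lt (fun i : Fin (Fintype.card X + 1) => seq i)
        (by simp)
    rcases Nat.lt_or_ge (i : ℕ) (j : ℕ) with h | h
    · exact ⟨j, i, h, hfij⟩
    · have : (j:ℕ) < i := lt_of_le_of_ne h (by simpa [Fin.val_eq_val] using (Ne.symm hij))
      exact ⟨i, j, this, hfij.symm⟩
  obtain ⟨a, hab, hseqab⟩ := Nat.find_spec hrep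
  set b := Nat.find hrep with hb
  have hinj : ∀ i j, a ≤ i → i < j → j < b → seq i ≠ seq j := by
    intro i j _ hij hjb heq
    exact Nat.find_min hrep hjb ⟨i, hij, heq⟩
  -- the move
  set A : X → X → ℤ := fun x y =>
    ∑ i ∈ Ico a b, (if x = seq i ∧ y = h (seq i) then (1:ℤ) else 0) with hA
  set B : X → X → ℤ := fun x y =>
    ∑ i ∈ Ico a b, (if x = seq (i+1) ∧ y = h (seq i) then (1:ℤ) else 0) with hB
  have hA01 : ∀ x y, A x y = 0 ∨ A x y = 1 := by
    intro x y
    have hcard : ((Ico a b).filter (fun i => x = seq i ∧ y = h (seq i))).card ≤ 1 := by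
      refine Finset.card_le_one.mpr ?_
      intro i hi j hj
      simp only [mem_filter, mem_Ico] at hi hj
      by_contra hne
      rcases Nat.lt_or_ge i j with hlt | hge
      · exact hinj i j hi.1.1 hlt hj.1.2 (hi.2.1.symm.trans hj.2.1)
      · exact hinj j i hj.1.1 (lt_of_le_of_ne hge (Ne.symm hne)) hi.1.2
          (hj.2.1.symm.trans hi.2.1)
    have : A x y = ((Ico a b).filter (fun i => x = seq i ∧ y = h (seq i))).card := by
      rw [hA]; simp [Finset.sum_boole]
    omega
  have hApos : ∀ x y, A x y = 1 → 0 < D x y := by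
    intro x y hxy
    have : ∃ i ∈ Ico a b, x = seq i ∧ y = h (seq i) := by
      by_contra hc
      push_neg at hc
      have : A x y = 0 := by
        rw [hA]
        refine Finset.sum_eq_zero fun i hi => ?_
        simp only [ite_eq_right_iff]
        intro hxyi; exact absurd hxyi.2 ((hc i hi) hxyi.1)
      omega
    obtain ⟨i, _, hx, hy⟩ := this
    subst hx; subst hy; exact hDpos i
  have hB01 : ∀ x y, B x y = 0 ∨ B x y = 1 := by
    intro x y
    have hcard : ((Ico a b).filter (fun i => x = seq (i+1) ∧ y = h (seq i))).card ≤ 1 := by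
      refine Finset.card_le_one.mpr ?_
      intro i hi j hj
      simp only [mem_filter, mem_Ico] at hi hj
      by_contra hne
      have key : ∀ i j, a ≤ i → i < j → j < b →
          seq (i+1) ≠ seq (j+1) := by
        intro i j hai hij hjb
        rcases Nat.lt_or_ge (j+1) b with hjb' | hjb'
        · exact hinj (i+1) (j+1) (by omega) (by omega) hjb'
        · have hjb2 : j + 1 = b := by omega
          rw [hjb2, ← hseqab]
          intro heq
          exact hinj a (i+1) le_rfl (by omega) (by omega) heq.symm
      rcases Nat.lt_or_ge i j with hlt | hge
      · exact key i j hi.1.1 hlt hj.1.2 (hi.2.1.symm.trans hj.2.1)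
      · exact key j i hj.1.1 (lt_of_le_of_ne hge (Ne.symm hne)) hi.1.2
          (hj.2.1.symm.trans hi.2.1)
    have : B x y = ((Ico a b).filter (fun i => x = seq (i+1) ∧ y = h (seq i))).card := by
      rw [hB]; simp [Finset.sum_boole]
    omega
  have hBneg : ∀ x y, B x y = 1 → D x y < 0 := by
    intro x y hxy
    have : ∃ i ∈ Ico a b, x = seq (i+1) ∧ y = h (seq i) := by
      by_contra hc
      push_neg at hc
      have : B x y = 0 := by
        rw [hB]
        refine Finset.sum_eq_zero fun i hi => ?_
        simp only [ite_eq_right_iff]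
        intro hxyi; exact absurd hxyi.2 ((hc i hi) hxyi.1)
      omega
    obtain ⟨i, _, hx, hy⟩ := this
    subst hx; subst hy; exact hDneg i
  have hnotboth : ∀ x y, ¬ (A x y = 1 ∧ B x y = 1) := by
    rintro x y ⟨ha', hb'⟩
    have := hApos x y ha'
    have := hBneg x y hb'
    omega
  refine ⟨fun x y => A x y - B x y, ?_, ?_, ?_, ?_, ?_, ?_⟩
  · intro x y
    show A x y - B x y = -1 ∨ A x y - B x y = 0 ∨ A x y - B x y = 1
    rcases hA01 x y with h1 | h1 <;> rcases hB01 x y with h2 | h2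
    · omega
    · omega
    · omega
    · exact absurd ⟨h1, h2⟩ (hnotboth x y)
  · intro x
    have hrowA : ∑ y, A x y = ∑ i ∈ Ico a b, (if x = seq i then (1:ℤ) else 0) := by
      rw [hA, Finset.sum_comm]
      refine Finset.sum_congr rfl fun i _ => ?_
      simp [ite_and, Finset.sum_ite_eq']
    have hrowB : ∑ y, B x y = ∑ i ∈ Ico a b, (if x = seq (i+1) then (1:ℤ) else 0) := by
      rw [hB, Finset.sum_comm]
      refine Finset.sum_congr rfl fun i _ => ?_
      simp [ite_and, Finset.sum_ite_eq']
    rw [Finset.sum_sub_distrib, hrowA, hrowB, ← Finset.sum_sub_distrib,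
      telescope' (fun i => if x = seq i then (1:ℤ) else 0) a b hab.le, hseqab]
    ring
  · intro y
    rw [Finset.sum_sub_distrib, hA, hB, Finset.sum_comm, Finset.sum_comm (γ := X)]
    rw [← Finset.sum_sub_distrib]
    refine Finset.sum_eq_zero fun i _ => ?_
    have h1 : ∑ x, (if x = seq i ∧ y = h (seq i) then (1:ℤ) else 0)
        = if y = h (seq i) then 1 else 0 := by
      simp [ite_and, Finset.sum_ite_eq]
    have h2 : ∑ x, (if x = seq (i+1) ∧ y = h (seq i) then (1:ℤ) else 0)
        = if y = h (seq i) then 1 else 0 := by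
      simp [ite_and, Finset.sum_ite_eq]
    rw [h1, h2]; ring
  · intro x y hxy
    replace hxy : A x y - B x y = 1 := hxy
    rcases hA01 x y with h1 | h1 <;> rcases hB01 x y with h2 | h2
    · omega
    · omega
    · exact hApos x y h1
    · exact hApos x y h1
  · intro x y hxy
    replace hxy : A x y - B x y = -1 := hxy
    rcases hA01 x y with h1 | h1 <;> rcases hB01 x y with h2 | h2
    · omega
    · exact hBneg x y h2
    · omega
    · exact hBneg x y h2
  · refine ⟨seq a, h (seq a), ?_⟩
    have hA1 : A (seq a) (h (seq a)) = 1 := by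
      have hge : (1:ℤ) ≤ A (seq a) (h (seq a)) := by
        rw [hA]
        have ha : a ∈ Ico a b := by simp [mem_Ico]; omega
        calc (1:ℤ) = (if (seq a = seq a ∧ h (seq a) = h (seq a)) then (1:ℤ) else 0) := by simp
        _ ≤ _ := Finset.single_le_sum (f := fun i =>
            (if seq a = seq i ∧ h (seq a) = h (seq i) then (1:ℤ) else 0))
            (fun i _ => by positivity) ha
      rcases hA01 (seq a) (h (seq a)) with h1 | h1 <;> omega
    have hB0 : B (seq a) (h (seq a)) = 0 := by
      rcases hB01 (seq a) (h (seq a)) with h2 | h2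
      · exact h2
      · exact absurd ⟨hA1, h2⟩ (hnotboth _ _)
    show A (seq a) (h (seq a)) - B (seq a) (h (seq a)) ≠ 0
    rw [hA1, hB0]; omega


lemma cost_nonpos (c : X → X → ℝ) (G : Set (X × X))
    (hyp : ∀ M : X → X → ℝ,
        (∀ x y, M x y = -1 ∨ M x y = 0 ∨ M x y = 1) →
        (∀ x, ∑ y, M x y = 0) → (∀ y, ∑ x, M x y = 0) →
        (∀ x y, 0 < M x y → (x, y) ∈ G) →
        ∑ x, ∑ y, c x y * M x y ≤ 0) :
    ∀ (n : ℕ) (D : X → X → ℤ), (∑ x, ∑ y, (D x y).natAbs) = n →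
      (∀ x, ∑ y, D x y = 0) → (∀ y, ∑ x, D x y = 0) →
      (∀ x y, 0 < D x y → (x, y) ∈ G) →
      ∑ x, ∑ y, c x y * (D x y : ℝ) ≤ 0 := by
  intro n
  induction n using Nat.strong_induction_on with
  | _ n ih =>
    intro D hn hrow hcol hG
    by_cases hD : ∀ x y, D x y = 0
    · have : ∀ x, ∑ y, c x y * (D x y : ℝ) = 0 := by
        intro x; refine Finset.sum_eq_zero fun y _ => ?_; rw [hD x y]; simp
      rw [Finset.sum_congr rfl (fun x _ => this x)]; simp
    · push_neg at hD
      obtain ⟨M, hM01, hMrow, hMcol, hMpos, hMneg, hMne⟩ :=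
        extract_simple_move D hrow hcol hD
      have h1 : ∑ x, ∑ y, c x y * ((M x y : ℤ) : ℝ) ≤ 0 := by
        refine hyp (fun x y => ((M x y : ℤ) : ℝ)) ?_ ?_ ?_ ?_
        · intro x y; rcases hM01 x y with h|h|h <;> simp [h]
        · intro x
          show ∑ y, ((M x y : ℤ) : ℝ) = 0
          exact_mod_cast hMrow x
        · intro y
          show ∑ x, ((M x y : ℤ) : ℝ) = 0
          exact_mod_cast hMcol y
        · intro x y hxy
          replace hxy : (0:ℝ) < ((M x y : ℤ) : ℝ) := hxy
          have hxy' : (0:ℤ) < M x y := by exact_mod_cast hxy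
          have hMxy : M x y = 1 := by rcases hM01 x y with h|h|h <;> omega
          exact hG x y (hMpos x y hMxy)
      have hle : ∀ x y, (D x y - M x y).natAbs ≤ (D x y).natAbs := by
        intro x y
        rcases hM01 x y with h|h|h
        · have := hMneg x y h; omega
        · omega
        · have := hMpos x y h; omega
      obtain ⟨x1, y1, hx1⟩ := hMne
      have hlt1 : (D x1 y1 - M x1 y1).natAbs < (D x1 y1).natAbs := by
        rcases hM01 x1 y1 with h|h|h
        · have := hMneg x1 y1 h; omega
        · exact absurd h hx1
        · have := hMpos x1 y1 h; omega
      have hlt : ∑ x, ∑ y, (D x y - M x y).natAbs < n := by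
        rw [← hn]
        refine Finset.sum_lt_sum (fun x _ => Finset.sum_le_sum fun y _ => hle x y)
          ⟨x1, Finset.mem_univ _, ?_⟩
        exact Finset.sum_lt_sum (fun y _ => hle x1 y) ⟨y1, Finset.mem_univ _, hlt1⟩
      have h2 : ∑ x, ∑ y, c x y * ((D x y - M x y : ℤ) : ℝ) ≤ 0 := by
        refine ih _ hlt (fun x y => D x y - M x y) rfl ?_ ?_ ?_
        · intro x; rw [Finset.sum_sub_distrib, hrow x, hMrow x]; ring
        · intro y; rw [Finset.sum_sub_distrib, hcol y, hMcol y]; ring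
        · intro x y hxy
          replace hxy : 0 < D x y - M x y := hxy
          refine hG x y ?_
          rcases hM01 x y with h|h|h
          · have := hMneg x y h; omega
          · omega
          · have := hMpos x y h; omega
      have key : ∑ x, ∑ y, c x y * (D x y : ℝ)
          = (∑ x, ∑ y, c x y * ((M x y : ℤ) : ℝ))
            + ∑ x, ∑ y, c x y * ((D x y - M x y : ℤ) : ℝ) := by
        rw [← Finset.sum_add_distrib]
        refine Finset.sum_congr rfl fun x _ => ?_
        rw [← Finset.sum_add_distrib]
        refine Finset.sum_congr rfl fun y _ => ?_
        push_cast; ring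
      linarith

lemma cm_of_moves (c : X → X → ℝ) (G : Set (X × X))
    (hyp : ∀ M : X → X → ℝ,
        (∀ x y, M x y = -1 ∨ M x y = 0 ∨ M x y = 1) →
        (∀ x, ∑ y, M x y = 0) → (∀ y, ∑ x, M x y = 0) →
        (∀ x y, 0 < M x y → (x, y) ∈ G) →
        ∑ x, ∑ y, c x y * M x y ≤ 0)
    (k : ℕ) (f : Fin k → X × X) (hf : ∀ i, f i ∈ G) (σ : Equiv.Perm (Fin k)) :
    ∑ i, c (f i).1 (f i).2 ≤ ∑ i, c (f i).1 (f (σ i)).2 := by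
  classical
  set D : X → X → ℤ := fun x y =>
    (∑ i, if f i = (x, y) then (1:ℤ) else 0)
      - (∑ i, if (f i).1 = x ∧ (f (σ i)).2 = y then (1:ℤ) else 0) with hD
  have hrow : ∀ x, ∑ y, D x y = 0 := by
    intro x
    rw [hD]
    show ∑ y, ((∑ i, if f i = (x, y) then (1:ℤ) else 0)
      - (∑ i, if (f i).1 = x ∧ (f (σ i)).2 = y then (1:ℤ) else 0)) = 0
    rw [Finset.sum_sub_distrib, Finset.sum_comm, Finset.sum_comm (γ := X)]
    have h1 : ∀ i : Fin k, ∑ y, (if f i = (x, y) then (1:ℤ) else 0)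
        = if (f i).1 = x then 1 else 0 := by
      intro i
      simp [Prod.ext_iff, ite_and, Finset.sum_ite_eq, Finset.sum_ite_eq']
    have h2 : ∀ i : Fin k, ∑ y, (if (f i).1 = x ∧ (f (σ i)).2 = y then (1:ℤ) else 0)
        = if (f i).1 = x then 1 else 0 := by
      intro i
      simp [ite_and, Finset.sum_ite_eq, Finset.sum_ite_eq']
    rw [Finset.sum_congr rfl fun i _ => h1 i, Finset.sum_congr rfl fun i _ => h2 i]
    ring
  have hcol : ∀ y, ∑ x, D x y = 0 := by
    intro y
    rw [hD]
    show ∑ x, ((∑ i, if f i = (x, y) then (1:ℤ) else 0)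
      - (∑ i, if (f i).1 = x ∧ (f (σ i)).2 = y then (1:ℤ) else 0)) = 0
    rw [Finset.sum_sub_distrib, Finset.sum_comm, Finset.sum_comm (γ := X)]
    have h1 : ∀ i : Fin k, ∑ x, (if f i = (x, y) then (1:ℤ) else 0)
        = if (f i).2 = y then 1 else 0 := by
      intro i
      simp [Prod.ext_iff, ite_and, Finset.sum_ite_eq, Finset.sum_ite_eq']
    have h2 : ∀ i : Fin k, ∑ x, (if (f i).1 = x ∧ (f (σ i)).2 = y then (1:ℤ) else 0)
        = if (f (σ i)).2 = y then 1 else 0 := by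
      intro i
      simp [ite_and, Finset.sum_ite_eq, Finset.sum_ite_eq']
    rw [Finset.sum_congr rfl fun i _ => h1 i, Finset.sum_congr rfl fun i _ => h2 i]
    rw [Equiv.sum_comp σ (fun j => if (f j).2 = y then (1:ℤ) else 0)]
    ring
  have hG : ∀ x y, 0 < D x y → (x, y) ∈ G := by
    intro x y hxy
    rw [hD] at hxy
    replace hxy : (0:ℤ) < (∑ i, if f i = (x, y) then (1:ℤ) else 0)
      - (∑ i, if (f i).1 = x ∧ (f (σ i)).2 = y then (1:ℤ) else 0) := hxy
    have hpos : (0:ℤ) < ∑ i, if f i = (x, y) then (1:ℤ) else 0 := by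
      have hnn : (0:ℤ) ≤ ∑ i, if (f i).1 = x ∧ (f (σ i)).2 = y then (1:ℤ) else 0 :=
        Finset.sum_nonneg fun i _ => by positivity
      omega
    have : ∃ i, f i = (x, y) := by
      by_contra hc
      push_neg at hc
      have : ∑ i, (if f i = (x, y) then (1:ℤ) else 0) = 0 :=
        Finset.sum_eq_zero fun i _ => by simp [hc i]
      omega
    obtain ⟨i, hi⟩ := this
    rw [← hi]; exact hf i
  have hcost : ∑ x, ∑ y, c x y * (D x y : ℝ)
      = (∑ i, c (f i).1 (f i).2) - ∑ i, c (f i).1 (f (σ i)).2 := by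
    have hterm : ∀ x y, c x y * (D x y : ℝ)
        = (∑ i, if f i = (x, y) then c x y else 0)
          - (∑ i, if (f i).1 = x ∧ (f (σ i)).2 = y then c x y else 0) := by
      intro x y
      rw [hD]
      push_cast
      rw [mul_sub, Finset.mul_sum, Finset.mul_sum]
      congr 1 <;> exact Finset.sum_congr rfl fun i _ => by rw [mul_ite, mul_one, mul_zero]
    have swap1 : ∀ (g : Fin k → X → X → ℝ),
        ∑ x, ∑ y, ∑ i, g i x y = ∑ i, ∑ x, ∑ y, g i x y := by
      intro g
      rw [Finset.sum_congr rfl fun x _ => Finset.sum_comm, Finset.sum_comm]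
    have h1 : ∀ i : Fin k, ∑ x, ∑ y, (if f i = (x, y) then c x y else 0)
        = c (f i).1 (f i).2 := by
      intro i
      simp [Prod.ext_iff, ite_and, Finset.sum_ite_eq, Finset.sum_ite_eq']
    have h2 : ∀ i : Fin k, ∑ x, ∑ y, (if (f i).1 = x ∧ (f (σ i)).2 = y then c x y else 0)
        = c (f i).1 (f (σ i)).2 := by
      intro i
      simp [ite_and, Finset.sum_ite_eq, Finset.sum_ite_eq']
    calc ∑ x, ∑ y, c x y * (D x y : ℝ)
        = ∑ x, ∑ y, ((∑ i, if f i = (x, y) then c x y else 0)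
            - (∑ i, if (f i).1 = x ∧ (f (σ i)).2 = y then c x y else 0)) :=
          Finset.sum_congr rfl fun x _ => Finset.sum_congr rfl fun y _ => hterm x y
      _ = (∑ x, ∑ y, ∑ i, if f i = (x, y) then c x y else 0)
          - (∑ x, ∑ y, ∑ i, if (f i).1 = x ∧ (f (σ i)).2 = y then c x y else 0) := by
          rw [← Finset.sum_sub_distrib]
          exact Finset.sum_congr rfl fun x _ => by rw [← Finset.sum_sub_distrib]
      _ = (∑ i, ∑ x, ∑ y, if f i = (x, y) then c x y else 0)
          - (∑ i, ∑ x, ∑ y, if (f i).1 = x ∧ (f (σ i)).2 = y then c x y else 0) := by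
          rw [swap1, swap1]
      _ = (∑ i, c (f i).1 (f i).2) - ∑ i, c (f i).1 (f (σ i)).2 := by
          rw [Finset.sum_congr rfl fun i _ => h1 i, Finset.sum_congr rfl fun i _ => h2 i]
  have := cost_nonpos c G hyp _ D rfl hrow hcol hG
  rw [hcost] at this
  linarith

lemma moves_of_cm (c : X → X → ℝ) (G : Set (X × X)) (hcm : CyclicallyMonotone c G)
    (M : X → X → ℝ)
    (hM01 : ∀ x y, M x y = -1 ∨ M x y = 0 ∨ M x y = 1)
    (hMrow : ∀ x, ∑ y, M x y = 0) (hMcol : ∀ y, ∑ x, M x y = 0)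
    (hMG : ∀ x y, 0 < M x y → (x, y) ∈ G) :
    ∑ x, ∑ y, c x y * M x y ≤ 0 := by
  classical
  have hrowcard : ∀ x, Fintype.card {y // M x y = 1} = Fintype.card {y // M x y = -1} := by
    intro x
    have h : ∑ y, ((if M x y = 1 then (1:ℝ) else 0) - (if M x y = -1 then 1 else 0)) = 0 := by
      have h2 : ∑ y, ((if M x y = 1 then (1:ℝ) else 0) - (if M x y = -1 then 1 else 0))
          = ∑ y, M x y := by
        refine Finset.sum_congr rfl fun y _ => ?_
        rcases hM01 x y with h|h|h <;> rw [h] <;> norm_num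
      rw [h2, hMrow x]
    rw [Finset.sum_sub_distrib, Finset.sum_boole, Finset.sum_boole] at h
    have : ((univ.filter (fun y => M x y = 1)).card : ℝ)
        = ((univ.filter (fun y => M x y = -1)).card : ℝ) := by linarith
    have hcards := Nat.cast_inj (R := ℝ).mp this
    rw [Fintype.card_subtype, Fintype.card_subtype, hcards]
  have hcolcard : ∀ y, Fintype.card {x // M x y = 1} = Fintype.card {x // M x y = -1} := by
    intro y
    have h : ∑ x, ((if M x y = 1 then (1:ℝ) else 0) - (if M x y = -1 then 1 else 0)) = 0 := by
      have h2 : ∑ x, ((if M x y = 1 then (1:ℝ) else 0) - (if M x y = -1 then 1 else 0))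
          = ∑ x, M x y := by
        refine Finset.sum_congr rfl fun x _ => ?_
        rcases hM01 x y with h|h|h <;> rw [h] <;> norm_num
      rw [h2, hMcol y]
    rw [Finset.sum_sub_distrib, Finset.sum_boole, Finset.sum_boole] at h
    have : ((univ.filter (fun x => M x y = 1)).card : ℝ)
        = ((univ.filter (fun x => M x y = -1)).card : ℝ) := by linarith
    have hcards := Nat.cast_inj (R := ℝ).mp this
    rw [Fintype.card_subtype, Fintype.card_subtype, hcards]
  let eRow : ∀ x, {y // M x y = 1} ≃ {y // M x y = -1} :=
    fun x => Fintype.equivOfCardEq (hrowcard x)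
  let eCol : ∀ y, {x // M x y = 1} ≃ {x // M x y = -1} :=
    fun y => Fintype.equivOfCardEq (hcolcard y)
  let E1 : {p : X × X // M p.1 p.2 = 1} ≃ Σ x, {y // M x y = 1} :=
    ⟨fun p => ⟨p.1.1, p.1.2, p.2⟩, fun q => ⟨(q.1, q.2.1), q.2.2⟩,
      fun ⟨⟨x,y⟩,h⟩ => rfl, fun ⟨x,y,h⟩ => rfl⟩
  let E1' : {p : X × X // M p.1 p.2 = -1} ≃ Σ x, {y // M x y = -1} :=
    ⟨fun p => ⟨p.1.1, p.1.2, p.2⟩, fun q => ⟨(q.1, q.2.1), q.2.2⟩,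
      fun ⟨⟨x,y⟩,h⟩ => rfl, fun ⟨x,y,h⟩ => rfl⟩
  let E2 : {p : X × X // M p.1 p.2 = 1} ≃ Σ y, {x // M x y = 1} :=
    ⟨fun p => ⟨p.1.2, p.1.1, p.2⟩, fun q => ⟨(q.2.1, q.1), q.2.2⟩,
      fun ⟨⟨x,y⟩,h⟩ => rfl, fun ⟨y,x,h⟩ => rfl⟩
  let E2' : {p : X × X // M p.1 p.2 = -1} ≃ Σ y, {x // M x y = -1} :=
    ⟨fun p => ⟨p.1.2, p.1.1, p.2⟩, fun q => ⟨(q.2.1, q.1), q.2.2⟩,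
      fun ⟨⟨x,y⟩,h⟩ => rfl, fun ⟨y,x,h⟩ => rfl⟩
  let φ : {p : X × X // M p.1 p.2 = 1} ≃ {p : X × X // M p.1 p.2 = -1} :=
    E1.trans ((Equiv.sigmaCongrRight eRow).trans E1'.symm)
  let ψ : {p : X × X // M p.1 p.2 = 1} ≃ {p : X × X // M p.1 p.2 = -1} :=
    E2.trans ((Equiv.sigmaCongrRight eCol).trans E2'.symm)
  have hφ1 : ∀ p, (φ p).val.1 = p.val.1 := fun p => rfl
  have hψ2 : ∀ p, (ψ p).val.2 = p.val.2 := fun p => rfl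
  have hψs2 : ∀ n, (ψ.symm n).val.2 = n.val.2 := by
    intro n
    have := hψ2 (ψ.symm n)
    rwa [Equiv.apply_symm_apply] at this
  set k := Fintype.card {p : X × X // M p.1 p.2 = 1} with hk
  let eP : Fin k ≃ {p : X × X // M p.1 p.2 = 1} := (Fintype.equivFin _).symm
  set f : Fin k → X × X := fun i => (eP i).val with hfdef
  have hf : ∀ i, f i ∈ G := by
    intro i
    have h := (eP i).2
    have := hMG (eP i).val.1 (eP i).val.2 (by rw [h]; norm_num)
    simpa using this
  let σ : Equiv.Perm (Fin k) := (eP.trans (φ.trans ψ.symm)).trans eP.symm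
  have hmain := hcm k f hf σ
  have hLHS : ∑ i, c (f i).1 (f i).2 = ∑ p : {p : X × X // M p.1 p.2 = 1}, c p.val.1 p.val.2 :=
    Equiv.sum_comp eP (fun p => c p.val.1 p.val.2)
  have hRHS : ∑ i, c (f i).1 (f (σ i)).2
      = ∑ n : {p : X × X // M p.1 p.2 = -1}, c n.val.1 n.val.2 := by
    have hterm : ∀ i, c (f i).1 (f (σ i)).2 = c (φ (eP i)).val.1 (φ (eP i)).val.2 := by
      intro i
      have h1 : f (σ i) = (ψ.symm (φ (eP i))).val := by
        show (eP (eP.symm ((φ.trans ψ.symm) (eP i)))).val = _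
        rw [Equiv.apply_symm_apply]
        rfl
      rw [h1, hψs2, hfdef, hφ1]
    rw [Finset.sum_congr rfl (fun i _ => hterm i)]
    rw [Equiv.sum_comp eP (fun p => c (φ p).val.1 (φ p).val.2)]
    exact Equiv.sum_comp φ (fun n => c n.val.1 n.val.2)
  have hcost : ∑ x, ∑ y, c x y * M x y
      = (∑ p : {p : X × X // M p.1 p.2 = 1}, c p.val.1 p.val.2)
        - ∑ n : {p : X × X // M p.1 p.2 = -1}, c n.val.1 n.val.2 := by
    have step1 : ∑ x, ∑ y, c x y * M x y
        = ∑ p : X × X, ((if M p.1 p.2 = 1 then c p.1 p.2 else 0)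
            - (if M p.1 p.2 = -1 then c p.1 p.2 else 0)) := by
      rw [Fintype.sum_prod_type]
      refine Finset.sum_congr rfl fun x _ => Finset.sum_congr rfl fun y _ => ?_
      rcases hM01 x y with h|h|h <;> rw [h] <;> norm_num
    rw [step1, Finset.sum_sub_distrib]
    congr 1
    · rw [← Finset.sum_filter]
      exact Finset.sum_subtype (univ.filter (fun p : X × X => M p.1 p.2 = 1))
        (by simp) (fun p => c p.1 p.2)
    · rw [← Finset.sum_filter]
      exact Finset.sum_subtype (univ.filter (fun p : X × X => M p.1 p.2 = -1))
        (by simp) (fun p => c p.1 p.2)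
  rw [hLHS] at hmain
  rw [hRHS] at hmain
  rw [hcost]
  linarith

end Aux

/-- `G ⊆ X × X` is `c`-cyclically monotone iff every simple move `M` with
`{M > 0} ⊆ G` has nonpositive `c`-cost. -/
theorem cyclicallyMonotone_iff_simple_moves_nonpos
    {X : Type*} [Fintype X] (c : X → X → ℝ) (G : Set (X × X)) :
    CyclicallyMonotone c G ↔
      ∀ M : X → X → ℝ,
        (∀ x y, M x y = -1 ∨ M x y = 0 ∨ M x y = 1) →
        (∀ x, ∑ y, M x y = 0) → (∀ y, ∑ x, M x y = 0) →
        (∀ x y, 0 < M x y → (x, y) ∈ G) →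
        ∑ x, ∑ y, c x y * M x y ≤ 0 := by
  constructor
  · intro hcm M hM01 hMrow hMcol hMG
    exact moves_of_cm c G hcm M hM01 hMrow hMcol hMG
  · intro hyp k f hf σ
    exact cm_of_moves c G hyp k f hf σ
end

section
/- If γ̃ is an optimal coupling for K_d(μ, ν) and 0 ≤ s ≤ t ≤ 1, then γ̃(x,y;s,t) = [(1−t)μ(x) + sν(y)]·1{x=y} + (t−s)γ̃(x,y) is an optimal coupling of μ(s) = (1−s)μ + sν and μ(t) = (1−t)μ + tν, with cost (t−s)K_d(μ, ν). -/
def IsCoupling {X : Type*} [Fintype X] (μ ν : X → ℝ) (γ : X → X → ℝ) : Prop :=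
  (∀ x y, 0 ≤ γ x y) ∧ (∀ x, ∑ y, γ x y = μ x) ∧ (∀ y, ∑ x, γ x y = ν y)

noncomputable def Kd {X : Type*} [Fintype X] (d : X → X → ℝ) (μ ν : X → ℝ) : ℝ :=
  sInf {r | ∃ γ, IsCoupling μ ν γ ∧ r = ∑ x, ∑ y, d x y * γ x y}

/-- interpolated coupling is a coupling with cost `(t-s) * cost γ` -/
lemma interp_coupling {X : Type*} [Fintype X] [DecidableEq X] (d : X → X → ℝ)
    (hd_eq : ∀ x y, d x y = 0 ↔ x = y)
    (μ ν : X → ℝ) (γ : X → X → ℝ) (hγ : IsCoupling μ ν γ)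
    (s t : ℝ) (hs : 0 ≤ s) (hst : s ≤ t) (ht : t ≤ 1) :
    IsCoupling (fun x => (1 - s) * μ x + s * ν x) (fun x => (1 - t) * μ x + t * ν x)
      (fun x y => (if x = y then (1 - t) * μ x + s * ν y else 0) + (t - s) * γ x y) ∧
    (∑ x, ∑ y, d x y *
        ((if x = y then (1 - t) * μ x + s * ν y else 0) + (t - s) * γ x y)) =
      (t - s) * (∑ x, ∑ y, d x y * γ x y) := by
  obtain ⟨hγ0, hγr, hγc⟩ := hγ
  have hμ0 : ∀ x, 0 ≤ μ x := fun x => (hγr x) ▸ Finset.sum_nonneg fun y _ => hγ0 x y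
  have hν0 : ∀ y, 0 ≤ ν y := fun y => (hγc y) ▸ Finset.sum_nonneg fun x _ => hγ0 x y
  refine ⟨⟨?_, ?_, ?_⟩, ?_⟩
  · intro x y
    have h1 : 0 ≤ (t - s) * γ x y := mul_nonneg (by linarith) (hγ0 x y)
    by_cases h : x = y
    · subst h
      have h2 : 0 ≤ (1 - t) * μ x + s * ν x :=
        add_nonneg (mul_nonneg (by linarith) (hμ0 x)) (mul_nonneg hs (hν0 x))
      simp only [ite_true, eq_self_iff_true]; linarith
    · simp [h, h1]
  · intro x
    rw [Finset.sum_add_distrib, ← Finset.mul_sum, hγr x, Finset.sum_ite_eq]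
    simp; ring
  · intro y
    rw [Finset.sum_add_distrib, ← Finset.mul_sum, hγc y, Finset.sum_ite_eq']
    simp; ring
  · have h1 : ∀ x y : X, d x y * ((if x = y then (1 - t) * μ x + s * ν y else 0)
        + (t - s) * γ x y) = (t - s) * (d x y * γ x y) := by
      intro x y
      by_cases h : x = y
      · subst h; rw [(hd_eq x x).2 rfl]; ring
      · simp [h]; ring
    simp only [h1, ← Finset.mul_sum]

/-- Gluing lemma: from couplings of (μ,ρ) and (ρ,ν), get a coupling of (μ,ν)
whose cost is at most the sum of the costs. -/
lemma glue_coupling {X : Type*} [Fintype X] (d : X → X → ℝ)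
    (hd0 : ∀ x y, 0 ≤ d x y)
    (hd_tri : ∀ x y z, d x z ≤ d x y + d y z)
    (μ ρ ν : X → ℝ) (α β : X → X → ℝ)
    (hα : IsCoupling μ ρ α) (hβ : IsCoupling ρ ν β) :
    ∃ g, IsCoupling μ ν g ∧
      (∑ x, ∑ z, d x z * g x z) ≤
        (∑ x, ∑ y, d x y * α x y) + (∑ y, ∑ z, d y z * β y z) := by
  classical
  obtain ⟨hα0, hαr, hαc⟩ := hα
  obtain ⟨hβ0, hβr, hβc⟩ := hβ
  have hρ0 : ∀ y, 0 ≤ ρ y := fun y => (hβr y) ▸ Finset.sum_nonneg fun z _ => hβ0 y z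
  have hαz : ∀ x y, ρ y = 0 → α x y = 0 := by
    intro x y hy
    have h := (Finset.sum_eq_zero_iff_of_nonneg (fun i _ => hα0 i y)).1 ((hαc y).trans hy)
    exact h x (Finset.mem_univ x)
  have hβz : ∀ y z, ρ y = 0 → β y z = 0 := by
    intro y z hy
    have h := (Finset.sum_eq_zero_iff_of_nonneg (fun i _ => hβ0 y i)).1 ((hβr y).trans hy)
    exact h z (Finset.mem_univ z)
  refine ⟨fun x z => ∑ y, if ρ y = 0 then 0 else α x y * β y z / ρ y, ⟨?_, ?_, ?_⟩, ?_⟩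
  · intro x z
    refine Finset.sum_nonneg fun y _ => ?_
    by_cases hy : ρ y = 0
    · simp [hy]
    · simp only [hy, if_false]
      exact div_nonneg (mul_nonneg (hα0 x y) (hβ0 y z)) (hρ0 y)
  · intro x
    rw [Finset.sum_comm]
    have : ∀ y : X, (∑ z, if ρ y = 0 then 0 else α x y * β y z / ρ y) = α x y := by
      intro y
      by_cases hy : ρ y = 0
      · simp [hy, hαz x y hy]
      · simp only [hy, if_false]
        rw [← Finset.sum_div, ← Finset.mul_sum, hβr y, mul_div_assoc, div_self hy, mul_one]
    rw [Finset.sum_congr rfl fun y _ => this y, hαr x]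
  · intro z
    rw [Finset.sum_comm]
    have : ∀ y : X, (∑ x, if ρ y = 0 then 0 else α x y * β y z / ρ y) = β y z := by
      intro y
      by_cases hy : ρ y = 0
      · simp [hy, hβz y z hy]
      · simp only [hy, if_false]
        rw [← Finset.sum_div, ← Finset.sum_mul, hαc y, mul_comm,
          mul_div_assoc, div_self hy, mul_one]
    rw [Finset.sum_congr rfl fun y _ => this y, hβc z]
  · have key : ∀ x z, d x z * (∑ y, if ρ y = 0 then 0 else α x y * β y z / ρ y) ≤
        ∑ y, ((if ρ y = 0 then 0 else d x y * (α x y * β y z / ρ y)) +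
              (if ρ y = 0 then 0 else d y z * (α x y * β y z / ρ y))) := by
      intro x z
      rw [Finset.mul_sum]
      refine Finset.sum_le_sum fun y _ => ?_
      by_cases hy : ρ y = 0
      · simp [hy]
      · simp only [hy, if_false]
        have hg : 0 ≤ α x y * β y z / ρ y :=
          div_nonneg (mul_nonneg (hα0 x y) (hβ0 y z)) (hρ0 y)
        have := hd_tri x y z
        nlinarith [mul_le_mul_of_nonneg_right this hg]
    calc (∑ x, ∑ z, d x z * ∑ y, if ρ y = 0 then 0 else α x y * β y z / ρ y)
        ≤ ∑ x, ∑ z, ∑ y, ((if ρ y = 0 then 0 else d x y * (α x y * β y z / ρ y)) +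
              (if ρ y = 0 then 0 else d y z * (α x y * β y z / ρ y))) := by
          refine Finset.sum_le_sum fun x _ => Finset.sum_le_sum fun z _ => key x z
      _ = (∑ x, ∑ y, ∑ z, if ρ y = 0 then 0 else d x y * (α x y * β y z / ρ y))
          + (∑ y, ∑ z, ∑ x, if ρ y = 0 then 0 else d y z * (α x y * β y z / ρ y)) := by
          simp only [Finset.sum_add_distrib]
          congr 1
          · exact Finset.sum_congr rfl fun x _ => Finset.sum_comm
          · exact (Finset.sum_comm.trans
              (Finset.sum_congr rfl fun z _ => Finset.sum_comm)).trans Finset.sum_comm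
      _ ≤ (∑ x, ∑ y, d x y * α x y) + (∑ y, ∑ z, d y z * β y z) := by
          gcongr with x _ y _ y _ z _
          · by_cases hy : ρ y = 0
            · simp [hy]
              exact mul_nonneg (hd0 x y) (hα0 x y)
            · simp only [hy, if_false]
              have : (∑ z, d x y * (α x y * β y z / ρ y))
                  = d x y * α x y * ((∑ z, β y z) / ρ y) := by
                rw [Finset.sum_div, Finset.mul_sum]
                congr 1; ext z; ring
              rw [this, hβr y, div_self hy, mul_one]
          · by_cases hy : ρ y = 0
            · simp [hy]
              exact mul_nonneg (hd0 y z) (hβ0 y z)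
            · simp only [hy, if_false]
              have : (∑ x, d y z * (α x y * β y z / ρ y))
                  = d y z * β y z * ((∑ x, α x y) / ρ y) := by
                rw [Finset.sum_div, Finset.mul_sum]
                congr 1; ext x; ring
              rw [this, hαc y, div_self hy, mul_one]

lemma Kd_le_cost {X : Type*} [Fintype X] (d : X → X → ℝ) (hd0 : ∀ x y, 0 ≤ d x y)
    (μ ν : X → ℝ) (γ : X → X → ℝ) (hγ : IsCoupling μ ν γ) :
    Kd d μ ν ≤ ∑ x, ∑ y, d x y * γ x y := by
  refine csInf_le ⟨0, ?_⟩ ⟨γ, hγ, rfl⟩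
  rintro r ⟨γ', hγ', rfl⟩
  exact Finset.sum_nonneg fun x _ => Finset.sum_nonneg fun y _ =>
    mul_nonneg (hd0 x y) (hγ'.1 x y)

/-- If `γ̃` is optimal for `K_d(μ, ν)` and `0 ≤ s ≤ t ≤ 1`, then
`γ̃(x,y;s,t) = [(1−t)μ(x) + sν(y)]·1{x=y} + (t−s)γ̃(x,y)` is an optimal coupling
of `μ(s)` and `μ(t)` with cost `(t−s) K_d(μ, ν)`. -/
theorem interpolated_coupling_is_optimal
    {X : Type*} [Fintype X] [DecidableEq X] (d : X → X → ℝ)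
    (hd_eq : ∀ x y, d x y = 0 ↔ x = y)
    (hd_symm : ∀ x y, d x y = d y x)
    (hd_tri : ∀ x y z, d x z ≤ d x y + d y z)
    (μ ν : X → ℝ)
    (hμ0 : ∀ x, 0 ≤ μ x) (hμ1 : ∑ x, μ x = 1)
    (hν0 : ∀ x, 0 ≤ ν x) (hν1 : ∑ x, ν x = 1)
    (γ : X → X → ℝ) (hγ : IsCoupling μ ν γ)
    (hγopt : ∑ x, ∑ y, d x y * γ x y = Kd d μ ν)
    (s t : ℝ) (hs : 0 ≤ s) (hst : s ≤ t) (ht : t ≤ 1) :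
    IsCoupling (fun x => (1 - s) * μ x + s * ν x) (fun x => (1 - t) * μ x + t * ν x)
      (fun x y => (if x = y then (1 - t) * μ x + s * ν y else 0) + (t - s) * γ x y) ∧
    (∑ x, ∑ y, d x y *
        ((if x = y then (1 - t) * μ x + s * ν y else 0) + (t - s) * γ x y)) =
      (t - s) * Kd d μ ν ∧
    (∑ x, ∑ y, d x y *
        ((if x = y then (1 - t) * μ x + s * ν y else 0) + (t - s) * γ x y)) =
      Kd d (fun x => (1 - s) * μ x + s * ν x) (fun x => (1 - t) * μ x + t * ν x) := by
  have hd0 : ∀ x y, 0 ≤ d x y := by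
    intro x y
    have h1 := hd_tri x y x
    rw [(hd_eq x x).2 rfl, hd_symm y x] at h1
    linarith
  obtain ⟨hcoup, hcost⟩ := interp_coupling d hd_eq μ ν γ hγ s t hs hst ht
  rw [hγopt] at hcost
  refine ⟨hcoup, hcost, ?_⟩
  rw [hcost]
  -- it remains to show (t-s) * Kd d μ ν = Kd d μs μt
  set C := Kd d μ ν with hC
  refine le_antisymm ?_ ?_
  · -- (t-s) * C ≤ Kd: every coupling β of μs μt has cost ≥ (t-s)*C
    refine le_csInf ⟨_, ⟨_, hcoup, rfl⟩⟩ ?_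
    rintro r ⟨β, hβ, rfl⟩
    -- coupling α of μ and μs with cost s * cost γ
    obtain ⟨hαcoup, hαcost⟩ := interp_coupling d hd_eq μ ν γ hγ 0 s le_rfl hs (hst.trans ht)
    have hα' : IsCoupling μ (fun x => (1 - s) * μ x + s * ν x)
        (fun x y => (if x = y then (1 - s) * μ x + 0 * ν y else 0) + (s - 0) * γ x y) := by
      obtain ⟨h1, h2, h3⟩ := hαcoup
      exact ⟨h1, fun x => by rw [h2 x]; ring, h3⟩
    -- coupling δ of μt and ν with cost (1-t) * cost γ
    obtain ⟨hδcoup, hδcost⟩ := interp_coupling d hd_eq μ ν γ hγ t 1 (hs.trans hst) ht le_rfl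
    have hδ' : IsCoupling (fun x => (1 - t) * μ x + t * ν x) ν
        (fun x y => (if x = y then (1 - 1) * μ x + t * ν y else 0) + (1 - t) * γ x y) := by
      obtain ⟨h1, h2, h3⟩ := hδcoup
      exact ⟨h1, h2, fun y => by rw [h3 y]; ring⟩
    -- glue α and β : coupling of μ and μt
    obtain ⟨g1, hg1, hg1cost⟩ := glue_coupling d hd0 hd_tri μ
      (fun x => (1 - s) * μ x + s * ν x) (fun x => (1 - t) * μ x + t * ν x) _ β hα' hβ
    -- glue g1 and δ : coupling of μ and ν
    obtain ⟨g2, hg2, hg2cost⟩ := glue_coupling d hd0 hd_tri μ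
      (fun x => (1 - t) * μ x + t * ν x) ν g1 _ hg1 hδ'
    have hK := Kd_le_cost d hd0 μ ν g2 hg2
    rw [hγopt] at hαcost hδcost
    linarith [hC]
  · -- Kd ≤ (t-s)*C via the constructed coupling
    rw [← hcost]
    exact Kd_le_cost d hd0 _ _ _ hcoup
end

section
/- Given two nondecreasing real sequences x₁ ≤ … ≤ x_N and y₁ ≤ … ≤ y_N, for every pair of permutations σ', σ'' ∈ S_N one has ∑_{i=1}^N |x_i − y_i| ≤ ∑_{i=1}^N |x_{σ'(i)} − y_{σ''(i)}| (Gini's co-graduation theorem: the co-monotone pairing minimizes the sum of absolute differences). -/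
private lemma gini_exchange {a b c d : ℝ} (hab : a ≤ b) (hcd : c ≤ d) :
    |a - c| + |b - d| ≤ |a - d| + |b - c| := by
  rcases abs_cases (a - c) with ⟨h1, _⟩ | ⟨h1, _⟩ <;>
  rcases abs_cases (b - d) with ⟨h2, _⟩ | ⟨h2, _⟩ <;>
  rcases abs_cases (a - d) with ⟨h3, _⟩ | ⟨h3, _⟩ <;>
  rcases abs_cases (b - c) with ⟨h4, _⟩ | ⟨h4, _⟩ <;> linarith

private lemma gini_aux : ∀ (n : ℕ) (x y : Fin n → ℝ), Monotone x → Monotone y →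
    ∀ τ : Equiv.Perm (Fin n), ∑ i, |x i - y i| ≤ ∑ i, |x (τ i) - y i| := by
  intro n
  induction n with
  | zero => intro x y _ _ τ; simp
  | succ n ih =>
    intro x y hx hy τ
    set k : Fin (n + 1) := τ⁻¹ 0 with hkdef
    set τ' : Equiv.Perm (Fin (n + 1)) := τ * Equiv.swap k 0 with hτ'def
    have hτk : τ k = 0 := Equiv.apply_symm_apply τ 0
    have hτ'0 : τ' 0 = 0 := by
      simp [hτ'def, Equiv.swap_apply_right, hτk]
    -- Step A: the swapped permutation gives a smaller sum
    have stepA : ∑ i, |x (τ' i) - y i| ≤ ∑ i, |x (τ i) - y i| := by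
      by_cases hk : k = 0
      · have : τ' = τ := by simp [hτ'def, hk]; rfl
        rw [this]
      · have hmem0 : (0 : Fin (n + 1)) ∈ Finset.univ := Finset.mem_univ _
        have hmemk : k ∈ Finset.univ.erase 0 :=
          Finset.mem_erase.mpr ⟨hk, Finset.mem_univ k⟩
        have split : ∀ f : Fin (n + 1) → ℝ, ∑ i, f i =
            f 0 + (f k + ∑ i ∈ (Finset.univ.erase 0).erase k, f i) := by
          intro f
          rw [Finset.add_sum_erase _ f hmemk, Finset.add_sum_erase _ f hmem0]
        rw [split (fun i => |x (τ' i) - y i|), split (fun i => |x (τ i) - y i|)]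
        have htail : ∑ i ∈ (Finset.univ.erase 0).erase k, |x (τ' i) - y i| =
            ∑ i ∈ (Finset.univ.erase 0).erase k, |x (τ i) - y i| := by
          refine Finset.sum_congr rfl fun i hi => ?_
          obtain ⟨hik, hi0, -⟩ : i ≠ k ∧ i ≠ 0 ∧ True := by
            rcases Finset.mem_erase.mp hi with ⟨h1, h2⟩
            exact ⟨h1, (Finset.mem_erase.mp h2).1, trivial⟩
          have : τ' i = τ i := by
            simp [hτ'def, Equiv.swap_apply_of_ne_of_ne hik hi0]
          rw [this]
        have hτ'k : τ' k = τ 0 := by simp [hτ'def, Equiv.swap_apply_left]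
        have key : |x (τ' 0) - y 0| + |x (τ' k) - y k| ≤
            |x (τ 0) - y 0| + |x (τ k) - y k| := by
          rw [hτ'0, hτ'k, hτk]
          have h1 : x 0 ≤ x (τ 0) := hx (Fin.zero_le _)
          have h2 : y 0 ≤ y k := hy (Fin.zero_le _)
          have := gini_exchange h1 h2
          linarith
        linarith [htail, key]
    -- Step B: τ' fixes 0, so restrict to Fin n and apply the IH
    refine le_trans ?_ stepA
    set p : Fin (n + 1) := (Equiv.Perm.decomposeFin τ').1 with hp
    set e : Equiv.Perm (Fin n) := (Equiv.Perm.decomposeFin τ').2 with he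
    have hτ'eq : τ' = Equiv.Perm.decomposeFin.symm (p, e) := by
      rw [hp, he]
      exact (Equiv.Perm.decomposeFin.symm_apply_apply τ').symm
    have hp0 : p = 0 := by
      have := Equiv.Perm.decomposeFin_symm_apply_zero p e
      rw [← hτ'eq, hτ'0] at this
      exact this.symm
    have hsucc : ∀ i : Fin n, τ' i.succ = (e i).succ := by
      intro i
      rw [hτ'eq, Equiv.Perm.decomposeFin_symm_apply_succ, hp0, Equiv.swap_self]
      rfl
    have hx' : Monotone (x ∘ Fin.succ) := hx.comp Fin.strictMono_succ.monotone
    have hy' : Monotone (y ∘ Fin.succ) := hy.comp Fin.strictMono_succ.monotone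
    have ihn := ih (x ∘ Fin.succ) (y ∘ Fin.succ) hx' hy' e
    rw [Fin.sum_univ_succ (fun i => |x i - y i|),
      Fin.sum_univ_succ (fun i => |x (τ' i) - y i|), hτ'0]
    have : ∑ i : Fin n, |x (τ' i.succ) - y i.succ| =
        ∑ i : Fin n, |x ((e i).succ) - y i.succ| :=
      Finset.sum_congr rfl fun i _ => by rw [hsucc i]
    rw [this]
    exact add_le_add_right ihn _

/-- Gini's co-graduation theorem: for nondecreasing sequences `x` and `y`, the
co-monotone pairing minimizes the sum of absolute differences over all pairs of
permutations. -/
theorem gini_cograduation_min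
    (N : ℕ) (x y : Fin N → ℝ) (hx : Monotone x) (hy : Monotone y)
    (σ' σ'' : Equiv.Perm (Fin N)) :
    ∑ i, |x i - y i| ≤ ∑ i, |x (σ' i) - y (σ'' i)| := by
  have hreindex : ∑ i, |x (σ' i) - y (σ'' i)| =
      ∑ j, |x ((σ' * σ''⁻¹) j) - y j| := by
    rw [← Equiv.sum_comp σ'' (fun j => |x ((σ' * σ''⁻¹) j) - y j|)]
    refine Finset.sum_congr rfl fun i _ => ?_
    simp
  rw [hreindex]
  exact gini_aux N x y hx hy (σ' * σ''⁻¹)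
end

section
/- Given two nondecreasing real sequences x₁ ≤ … ≤ x_N and y₁ ≤ … ≤ y_N, the counter-monotone pairing maximizes the sum of absolute differences: for every permutation σ ∈ S_N, ∑_{i=1}^N |x_{σ(i)} − y_i| ≤ ∑_{i=1}^N |x_{N+1−i} − y_i|. -/
open Equiv Equiv.Perm Finset Function

private lemma abs_add_supermodular (a b c d : ℝ) (hba : b ≤ a) (hdc : d ≤ c) :
    |a + d| + |b + c| ≤ |a + c| + |b + d| := by
  rcases abs_cases (a+d) with ⟨h1,h1'⟩|⟨h1,h1'⟩ <;>
  rcases abs_cases (b+c) with ⟨h2,h2'⟩|⟨h2,h2'⟩ <;>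
  rcases abs_cases (a+c) with ⟨h3,h3'⟩|⟨h3,h3'⟩ <;>
  rcases abs_cases (b+d) with ⟨h4,h4'⟩|⟨h4,h4'⟩ <;>
  linarith

private theorem monovaryOn_sum_F {ι : Type*} (F : ℝ → ℝ → ℝ)
    (hF : ∀ a b c d : ℝ, b ≤ a → d ≤ c → F a d + F b c ≤ F a c + F b d)
    {s : Finset ι} {σ : Perm ι} {f g : ι → ℝ} (hfg : MonovaryOn f g s)
    (hσ : {x | σ x ≠ x} ⊆ s) :
    ∑ i ∈ s, F (f i) (g (σ i)) ≤ ∑ i ∈ s, F (f i) (g i) := by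
  classical
  revert hσ σ hfg
  apply Finset.induction_on_max_value (fun i ↦ toLex (g i, f i))
    (motive := fun t ↦ ∀ {σ : Perm ι}, MonovaryOn f g t → {x | σ x ≠ x} ⊆ t →
      ∑ i ∈ t, F (f i) (g (σ i)) ≤ ∑ i ∈ t, F (f i) (g i)) s
  · simp only [le_rfl, Finset.sum_empty, imp_true_iff]
  intro a s has hamax hind σ hfg hσ
  set τ : Perm ι := σ.trans (swap a (σ a)) with hτ
  have hτs : {x | τ x ≠ x} ⊆ s := by
    intro x hx
    simp only [τ, Ne, Set.mem_setOf_eq, Equiv.coe_trans, Equiv.swap_comp_apply] at hx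
    split_ifs at hx with h₁ h₂
    · obtain rfl | hax := eq_or_ne x a
      · contradiction
      · exact mem_of_mem_insert_of_ne (hσ fun h ↦ hax <| h.symm.trans h₁) hax
    · exact (hx <| σ.injective h₂.symm).elim
    · exact mem_of_mem_insert_of_ne (hσ hx) (ne_of_apply_ne _ h₂)
  specialize hind (hfg.subset <| subset_insert _ _) hτs
  simp_rw [sum_insert has]
  refine le_trans ?_ (add_le_add_right hind _)
  obtain hσa | hσa := eq_or_ne a (σ a)
  · rw [hτ, ← hσa, swap_self, trans_refl]
  have hinv : σ (σ⁻¹ a) = a := σ.apply_symm_apply a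
  have h1s : σ⁻¹ a ∈ s := by
    rw [Ne, ← inv_eq_iff_eq] at hσa
    refine mem_of_mem_insert_of_ne (hσ fun h ↦ hσa ?_) hσa
    rwa [hinv, eq_comm] at h
  simp only [← s.sum_erase_add _ h1s, add_comm]
  rw [← add_assoc, ← add_assoc]
  simp only [hτ, swap_apply_left, Function.comp_apply, Equiv.coe_trans, hinv]
  refine add_le_add (hF _ _ _ _ ?_ ?_) (sum_congr rfl fun x hx ↦ ?_).le
  · specialize hamax (σ⁻¹ a) h1s
    rw [Prod.Lex.le_iff] at hamax
    cases' hamax with hamax hamax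
    · exact hfg (mem_insert_of_mem h1s) (mem_insert_self _ _) hamax
    · exact hamax.2
  · specialize hamax (σ a) (mem_of_mem_insert_of_ne (hσ <| σ.injective.ne hσa.symm) hσa.symm)
    rw [Prod.Lex.le_iff] at hamax
    cases' hamax with hamax hamax
    · exact hamax.le
    · exact hamax.1.le
  · rw [mem_erase, Ne, eq_inv_iff_eq] at hx
    rw [swap_apply_of_ne_of_ne hx.1 (σ.injective.ne _)]
    rintro rfl
    exact has hx.2

/-- For nondecreasing sequences `x` and `y`, the counter-monotone pairing
maximizes the sum of absolute differences: for every permutation `σ`,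
`∑ |x(σ(i)) − y(i)| ≤ ∑ |x(N+1−i) − y(i)|`. -/
theorem gini_countermonotone_max
    (N : ℕ) (x y : Fin N → ℝ) (hx : Monotone x) (hy : Monotone y)
    (σ : Equiv.Perm (Fin N)) :
    ∑ i, |x (σ i) - y i| ≤ ∑ i, |x i.rev - y i| := by
  set g : Fin N → ℝ := fun i ↦ -x i.rev with hg
  have hgmono : Monotone g := fun i j hij ↦ by
    simp only [hg, neg_le_neg_iff]
    exact hx (Fin.rev_le_rev.mpr hij)
  have hfg : MonovaryOn y g (Finset.univ : Finset (Fin N)) :=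
    (hy.monovary hgmono).monovaryOn _
  have key := monovaryOn_sum_F (fun a b ↦ |a + b|)
    (fun a b c d h1 h2 ↦ abs_add_supermodular a b c d h1 h2)
    (σ := σ.trans (Fin.revPerm)) hfg (by simp)
  calc ∑ i, |x (σ i) - y i| = ∑ i, |y i + g ((σ.trans Fin.revPerm) i)| := by
        refine Finset.sum_congr rfl fun i _ ↦ ?_
        simp only [hg, Equiv.trans_apply, Fin.revPerm_apply, Fin.rev_rev]
        rw [abs_sub_comm, sub_eq_add_neg]
    _ ≤ ∑ i, |y i + g i| := key
    _ = ∑ i, |x i.rev - y i| := by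
        refine Finset.sum_congr rfl fun i _ ↦ ?_
        simp only [hg]
        rw [← sub_eq_add_neg, abs_sub_comm]
end

section
/- For any coupling γ ∈ P(μ, ν) on X = {1,…,n}, there exist basic moves M₁, …, M_k and positive reals α₁, …, α_k such that the homophily coupling satisfies γ_H = γ − ∑_{i=1}^k α_i M_i and every partial sum γ − ∑_{i=1}^{k̄} α_i M_i, for k̄ = 1,…,k, is again a coupling in P(μ, ν). Consequently any two couplings in P(μ, ν) are connected by a path of basic moves staying inside P(μ, ν). -/
/-- A basic move `(δ_{x₁} − δ_{x₂}) ⊗ (δ_{y₁} − δ_{y₂})` with `x₁ ≠ x₂`, `y₁ ≠ y₂`. -/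
def IsBasicMove {n : ℕ} (M : Fin n → Fin n → ℝ) : Prop :=
  ∃ x₁ x₂ y₁ y₂ : Fin n, x₁ ≠ x₂ ∧ y₁ ≠ y₂ ∧ ∀ a b,
    M a b = ((if a = x₁ then (1:ℝ) else 0) - (if a = x₂ then 1 else 0)) *
            ((if b = y₁ then (1:ℝ) else 0) - (if b = y₂ then 1 else 0))

open Finset

namespace CouplingPath

inductive Chain {n : ℕ} (μ ν : Fin n → ℝ) :
    (Fin n → Fin n → ℝ) → (Fin n → Fin n → ℝ) → Prop
  | refl (γ : Fin n → Fin n → ℝ) (h : IsCoupling μ ν γ) : Chain μ ν γ γ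
  | step {γ γ₂ γ' : Fin n → Fin n → ℝ} (M : Fin n → Fin n → ℝ) (α : ℝ)
      (hM : IsBasicMove M) (hα : 0 < α) (hγ : IsCoupling μ ν γ)
      (heq : ∀ a b, γ₂ a b = γ a b - α * M a b)
      (hc : Chain μ ν γ₂ γ') : Chain μ ν γ γ'

theorem chain_movesTo {n : ℕ} {μ ν : Fin n → ℝ} {γ γ' : Fin n → Fin n → ℝ}
    (h : Chain μ ν γ γ') :
    ∃ (k : ℕ) (M : Fin k → Fin n → Fin n → ℝ) (α : Fin k → ℝ),
      (∀ i, IsBasicMove (M i)) ∧ (∀ i, 0 < α i) ∧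
      (∀ m : ℕ, m ≤ k → IsCoupling μ ν
        (fun a b => γ a b - ∑ i ∈ Finset.univ.filter (fun i : Fin k => (i : ℕ) < m),
          α i * M i a b)) ∧
      (∀ a b, γ' a b = γ a b - ∑ i, α i * M i a b) := by
  induction h with
  | refl γ h =>
      refine ⟨0, fun i => i.elim0, fun i => i.elim0, fun i => i.elim0, fun i => i.elim0,
        ?_, ?_⟩
      · intro m _; simpa using h
      · intro a b; simp
  | step M α hM hα hγ heq hc ih =>
      obtain ⟨k, Ms, αs, hMs, hαs, hpart, hfin⟩ := ih
      set Ms' : Fin (k+1) → Fin n → Fin n → ℝ := Fin.cons M Ms with hMs'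
      set αs' : Fin (k+1) → ℝ := Fin.cons α αs with hαs'
      refine ⟨k + 1, Ms', αs', ?_, ?_, ?_, ?_⟩
      · intro i
        refine Fin.cases ?_ ?_ i
        · simpa [hMs'] using hM
        · intro j; simpa [hMs'] using hMs j
      · intro i
        refine Fin.cases ?_ ?_ i
        · simpa [hαs'] using hα
        · intro j; simpa [hαs'] using hαs j
      · intro m hm
        have key : ∀ (m' : ℕ) (a b : Fin n),
            (∑ i ∈ Finset.univ.filter (fun i : Fin (k+1) => (i : ℕ) < m' + 1),
              αs' i * Ms' i a b)
            = α * M a b + ∑ i ∈ Finset.univ.filter (fun i : Fin k => (i : ℕ) < m'),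
                αs i * Ms i a b := by
          intro m' a b
          rw [Finset.sum_filter, Fin.sum_univ_succ, Finset.sum_filter]
          simp [hMs', hαs', Nat.succ_lt_succ_iff]
        rcases m with _ | m'
        · simpa using hγ
        · have h2 := hpart m' (by omega)
          rcases h2 with ⟨h0, h1, h2'⟩
          refine ⟨?_, ?_, ?_⟩
          · intro a b
            have := h0 a b
            simp only [key, heq] at *
            -- goal : 0 ≤ γ a b - (α * M a b + ∑ ...)
            have e := heq a b
            linarith [h0 a b]
          · intro a
            have := h1 a
            simp only [key]
            simp only [heq] at this
            rw [← this]
            apply Finset.sum_congr rfl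
            intro b _
            ring
          · intro b
            have := h2' b
            simp only [key]
            simp only [heq] at this
            rw [← this]
            apply Finset.sum_congr rfl
            intro a _
            ring
      · intro a b
        rw [Fin.sum_univ_succ]
        simp only [hMs', hαs', Fin.cons_zero, Fin.cons_succ]
        have := hfin a b
        rw [heq a b] at this
        linarith [hfin a b]


open Classical

variable {n : ℕ}

noncomputable def meas (γ' γ : Fin n → Fin n → ℝ) : ℕ :=
  if h : (univ.filter fun x : Fin n => γ x ≠ γ' x).Nonempty then
    let x₁ := (univ.filter fun x : Fin n => γ x ≠ γ' x).min' h
    let m₂ := (univ.filter fun y : Fin n => γ x₁ y ≠ γ' x₁ y).card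
    let T := univ.filter fun y : Fin n => γ x₁ y < γ' x₁ y
    let m₃ := if hT : T.Nonempty then
        (univ.filter fun x : Fin n => x ≠ x₁ ∧ 0 < γ x (T.min' hT)).card
      else 0
    ((n - (x₁ : ℕ)) * (n+1) + m₂) * (n+1) + m₃ + 1
  else 0

lemma meas_pos_eq (γ' γ : Fin n → Fin n → ℝ)
    (h : (univ.filter fun x : Fin n => γ x ≠ γ' x).Nonempty)
    (hT : (univ.filter fun y : Fin n =>
        γ ((univ.filter fun x : Fin n => γ x ≠ γ' x).min' h) y
        < γ' ((univ.filter fun x : Fin n => γ x ≠ γ' x).min' h) y).Nonempty) :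
    meas γ' γ =
      ((n - (((univ.filter fun x : Fin n => γ x ≠ γ' x).min' h : Fin n) : ℕ)) * (n+1)
        + (univ.filter fun y : Fin n =>
            γ ((univ.filter fun x : Fin n => γ x ≠ γ' x).min' h) y
            ≠ γ' ((univ.filter fun x : Fin n => γ x ≠ γ' x).min' h) y).card) * (n+1)
      + (univ.filter fun x : Fin n => x ≠ ((univ.filter fun x : Fin n => γ x ≠ γ' x).min' h)
          ∧ 0 < γ x ((univ.filter fun y : Fin n =>
              γ ((univ.filter fun x : Fin n => γ x ≠ γ' x).min' h) y
              < γ' ((univ.filter fun x : Fin n => γ x ≠ γ' x).min' h) y).min' hT)).card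
      + 1 := by
  rw [meas, dif_pos h]
  simp only []
  rw [dif_pos hT]

lemma meas_eq_zero (γ' γ : Fin n → Fin n → ℝ) (h : γ = γ') : meas γ' γ = 0 := by
  rw [meas, dif_neg]
  simp [h]

lemma sum_split (x₁ : Fin n) (f : Fin n → ℝ) :
    ∑ x, f x = (∑ x ∈ univ.filter (fun x => x < x₁), f x) + f x₁
      + ∑ x ∈ univ.filter (fun x => x₁ < x), f x := by
  rw [← Finset.sum_filter_add_sum_filter_not Finset.univ (fun x => x < x₁) f]
  have h : Finset.univ.filter (fun x => ¬ x < x₁)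
      = insert x₁ (Finset.univ.filter fun x => x₁ < x) := by
    ext x
    simp only [mem_filter, mem_univ, true_and, mem_insert, not_lt]
    constructor
    · intro hx; rcases eq_or_lt_of_le hx with h' | h'
      · exact Or.inl h'.symm
      · exact Or.inr h'
    · rintro (rfl | h'); · exact le_refl _
      · exact le_of_lt h'
  rw [h, Finset.sum_insert (by simp)]
  ring

lemma lex3 {n A A' B B' C C' : ℕ} (hB' : B' ≤ n) (hC' : C' ≤ n)
    (h : A' < A ∨ (A' = A ∧ B' < B) ∨ (A' = A ∧ B' ≤ B ∧ C' < C)) :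
    (A' * (n+1) + B') * (n+1) + C' + 1 < (A * (n+1) + B) * (n+1) + C + 1 := by
  rcases h with h | ⟨rfl, h⟩ | ⟨rfl, h1, h2⟩
  · have e1 : (A' * (n+1) + B') * (n+1) + C' + 1 ≤ (A'+1) * ((n+1)*(n+1)) := by nlinarith
    have e2 : (A'+1) * ((n+1)*(n+1)) ≤ A * ((n+1)*(n+1)) := Nat.mul_le_mul_right _ h
    nlinarith
  · have e1 : (A' * (n+1) + B') * (n+1) + C' + 1 ≤ (A' * (n+1) + B) * (n+1) := by nlinarith
    nlinarith
  · nlinarith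



lemma exists_lt_of_row_ne {μ ν : Fin n → ℝ} {γ γ' : Fin n → Fin n → ℝ}
    (hγ : IsCoupling μ ν γ) (hγ' : IsCoupling μ ν γ') (x : Fin n) (hx : γ x ≠ γ' x) :
    (∃ y, γ' x y < γ x y) ∧ (∃ y, γ x y < γ' x y) := by
  have hrowsum : ∑ y, (γ x y - γ' x y) = 0 := by
    rw [Finset.sum_sub_distrib, hγ.2.1 x, hγ'.2.1 x, sub_self]
  constructor
  · by_contra hc
    push_neg at hc
    apply hx
    funext y
    have := (Finset.sum_eq_zero_iff_of_nonpos
      (fun y _ => sub_nonpos.mpr (hc y))).mp hrowsum y (mem_univ y)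
    linarith
  · by_contra hc
    push_neg at hc
    apply hx
    funext y
    have := (Finset.sum_eq_zero_iff_of_nonneg
      (fun y _ => sub_nonneg.mpr (hc y))).mp hrowsum y (mem_univ y)
    linarith

lemma card_filter_le_n (p : Fin n → Prop) [DecidablePred p] :
    (univ.filter p).card ≤ n := by
  refine le_trans (Finset.card_filter_le _ _) (by simp)

lemma exists_step {μ ν : Fin n → ℝ} {γ γ' : Fin n → Fin n → ℝ}
    (hγ : IsCoupling μ ν γ) (hγ' : IsCoupling μ ν γ') (hne : γ ≠ γ') :
    ∃ (M : Fin n → Fin n → ℝ) (α : ℝ),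
      (∃ x₁ x₂ y₁ y₂ : Fin n, x₁ ≠ x₂ ∧ y₁ ≠ y₂ ∧ ∀ a b,
        M a b = ((if a = x₁ then (1:ℝ) else 0) - (if a = x₂ then 1 else 0)) *
                ((if b = y₁ then (1:ℝ) else 0) - (if b = y₂ then 1 else 0))) ∧ 0 < α ∧
      IsCoupling μ ν (fun a b => γ a b - α * M a b) ∧
      meas γ' (fun a b => γ a b - α * M a b) < meas γ' γ := by
  obtain ⟨h0, h1, h2⟩ := hγ
  obtain ⟨h0', h1', h2'⟩ := hγ'
  set S := univ.filter (fun x : Fin n => γ x ≠ γ' x) with hSdef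
  have hS : S.Nonempty := by
    obtain ⟨x, hx⟩ := Function.ne_iff.mp hne
    exact ⟨x, by simp [hSdef, hx]⟩
  set x₁ := S.min' hS with hx₁def
  have hx₁S : x₁ ∈ S := S.min'_mem hS
  have hx₁ne : γ x₁ ≠ γ' x₁ := by
    have := hx₁S
    rw [hSdef, mem_filter] at this
    exact this.2
  have hrowlt : ∀ x : Fin n, x < x₁ → γ x = γ' x := by
    intro x hx
    by_contra hxx
    exact absurd (S.min'_le x (by simp [hSdef, hxx])) (not_le.mpr hx)
  obtain ⟨⟨y₁, hy₁⟩, hTex⟩ := exists_lt_of_row_ne ⟨h0, h1, h2⟩ ⟨h0', h1', h2'⟩ x₁ hx₁ne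
  set T := univ.filter (fun y : Fin n => γ x₁ y < γ' x₁ y) with hTdef
  have hT : T.Nonempty := by
    obtain ⟨y, hy⟩ := hTex
    exact ⟨y, by simp [hTdef, hy]⟩
  set y₂ := T.min' hT with hy₂def
  have hy₂in : y₂ ∈ T := T.min'_mem hT
  have hy₂ : γ x₁ y₂ < γ' x₁ y₂ := (mem_filter.mp hy₂in).2
  have hy12 : y₁ ≠ y₂ := by
    intro h
    rw [h] at hy₁
    linarith
  have hx₂ex : ∃ x : Fin n, x₁ < x ∧ 0 < γ x y₂ := by
    by_contra hc
    push_neg at hc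
    have hsum : ∑ x ∈ univ.filter (fun x => x₁ < x), γ x y₂ ≤ 0 :=
      Finset.sum_nonpos (fun x hx => hc x (by simpa using hx))
    have hA : ∑ x ∈ univ.filter (fun x => x < x₁), γ x y₂
        = ∑ x ∈ univ.filter (fun x => x < x₁), γ' x y₂ := by
      apply Finset.sum_congr rfl
      intro x hx
      rw [hrowlt x (by simpa using hx)]
    have hCs' : 0 ≤ ∑ x ∈ univ.filter (fun x => x₁ < x), γ' x y₂ :=
      Finset.sum_nonneg (fun x _ => h0' x y₂)
    have e1 := (h2 y₂).symm.trans (sum_split x₁ fun x => γ x y₂)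
    have e2 := (h2' y₂).symm.trans (sum_split x₁ fun x => γ' x y₂)
    rw [hA] at e1
    linarith
  obtain ⟨x₂, hx12, hc0⟩ := hx₂ex
  set g₁ := γ x₁ y₁ - γ' x₁ y₁ with hg₁
  set g₂ := γ' x₁ y₂ - γ x₁ y₂ with hg₂
  set α := min g₁ (min g₂ (γ x₂ y₂)) with hαdef
  have hαpos : 0 < α := by
    apply lt_min (by rw [hg₁]; linarith)
    exact lt_min (by rw [hg₂]; linarith) hc0
  have hαg₁ : α ≤ g₁ := min_le_left _ _
  have hαg₂ : α ≤ g₂ := le_trans (min_le_right _ _) (min_le_left _ _)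
  have hαc : α ≤ γ x₂ y₂ := le_trans (min_le_right _ _) (min_le_right _ _)
  set M : Fin n → Fin n → ℝ := fun a b =>
    ((if a = x₁ then (1:ℝ) else 0) - (if a = x₂ then 1 else 0)) *
    ((if b = y₁ then (1:ℝ) else 0) - (if b = y₂ then 1 else 0)) with hMdef
  have hx₁x₂ : x₁ ≠ x₂ := ne_of_lt hx12
  set γ₂ : Fin n → Fin n → ℝ := fun a b => γ a b - α * M a b with hγ₂def
  have hMrow : ∀ a b, a ≠ x₁ → a ≠ x₂ → γ₂ a b = γ a b := by
    intro a b hh₁ hh₂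
    simp [hγ₂def, hMdef, hh₁, hh₂]
  have hMcol : ∀ a b, b ≠ y₁ → b ≠ y₂ → γ₂ a b = γ a b := by
    intro a b hh₁ hh₂
    simp [hγ₂def, hMdef, hh₁, hh₂]
  have hv11 : γ₂ x₁ y₁ = γ x₁ y₁ - α := by
    simp [hγ₂def, hMdef, hx₁x₂, hy12]
  have hv12 : γ₂ x₁ y₂ = γ x₁ y₂ + α := by
    simp [hγ₂def, hMdef, hx₁x₂, Ne.symm hy12]
    try ring
  have hv21 : γ₂ x₂ y₁ = γ x₂ y₁ + α := by
    simp [hγ₂def, hMdef, Ne.symm hx₁x₂, hy12]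
    try ring
  have hv22 : γ₂ x₂ y₂ = γ x₂ y₂ - α := by
    simp [hγ₂def, hMdef, Ne.symm hx₁x₂, Ne.symm hy12]
  have hγ₂0 : ∀ a b, 0 ≤ γ₂ a b := by
    intro a b
    by_cases ha1 : a = x₁
    · by_cases hb1 : b = y₁
      · rw [ha1, hb1, hv11]
        have := h0' x₁ y₁
        rw [hg₁] at hαg₁
        linarith
      · by_cases hb2 : b = y₂
        · rw [ha1, hb2, hv12]
          have := h0 x₁ y₂
          linarith
        · rw [hMcol a b hb1 hb2]
          exact h0 a b
    · by_cases ha2 : a = x₂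
      · by_cases hb2 : b = y₂
        · rw [ha2, hb2, hv22]
          linarith
        · by_cases hb1 : b = y₁
          · rw [ha2, hb1, hv21]
            have := h0 x₂ y₁
            linarith
          · rw [hMcol a b hb1 hb2]
            exact h0 a b
      · rw [hMrow a b ha1 ha2]
        exact h0 a b
  have hMsumrow : ∀ a, ∑ b, M a b = 0 := by
    intro a
    rw [hMdef]
    rw [← Finset.mul_sum]
    rw [Finset.sum_sub_distrib]
    simp
  have hMsumcol : ∀ b, ∑ a, M a b = 0 := by
    intro b
    rw [hMdef]
    have : ∀ a : Fin n, ((if a = x₁ then (1:ℝ) else 0) - (if a = x₂ then 1 else 0)) *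
        ((if b = y₁ then (1:ℝ) else 0) - (if b = y₂ then 1 else 0))
        = ((if b = y₁ then (1:ℝ) else 0) - (if b = y₂ then 1 else 0)) *
          ((if a = x₁ then (1:ℝ) else 0) - (if a = x₂ then 1 else 0)) := fun a => mul_comm _ _
    rw [Finset.sum_congr rfl (fun a _ => this a)]
    rw [← Finset.mul_sum]
    rw [Finset.sum_sub_distrib]
    simp
  have hγ₂coup : IsCoupling μ ν γ₂ := by
    refine ⟨hγ₂0, ?_, ?_⟩
    · intro a
      rw [hγ₂def]
      simp only []
      rw [Finset.sum_sub_distrib, ← Finset.mul_sum, hMsumrow, mul_zero, sub_zero]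
      exact h1 a
    · intro b
      rw [hγ₂def]
      simp only []
      rw [Finset.sum_sub_distrib, ← Finset.mul_sum, hMsumcol, mul_zero, sub_zero]
      exact h2 b
  refine ⟨M, α, ⟨x₁, x₂, y₁, y₂, hx₁x₂, hy12, fun a b => rfl⟩, hαpos, hγ₂coup, ?_⟩
  show meas γ' γ₂ < meas γ' γ
  have hmeasγ : meas γ' γ = ((n - (x₁ : ℕ)) * (n+1)
      + (univ.filter fun y : Fin n => γ x₁ y ≠ γ' x₁ y).card) * (n+1)
      + (univ.filter fun x : Fin n => x ≠ x₁ ∧ 0 < γ x y₂).card + 1 :=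
    meas_pos_eq γ' γ hS hT
  by_cases hfin : γ₂ = γ'
  · rw [meas_eq_zero γ' γ₂ hfin, hmeasγ]
    omega
  have hS₂ : (univ.filter fun x : Fin n => γ₂ x ≠ γ' x).Nonempty := by
    obtain ⟨x, hx⟩ := Function.ne_iff.mp hfin
    exact ⟨x, by simp [hx]⟩
  set S₂ := univ.filter (fun x : Fin n => γ₂ x ≠ γ' x) with hS₂def
  set x₁' := S₂.min' hS₂ with hx₁'def
  have hx₁'S : x₁' ∈ S₂ := S₂.min'_mem hS₂
  have hx₁'ne : γ₂ x₁' ≠ γ' x₁' := (mem_filter.mp hx₁'S).2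
  have hrow2 : ∀ x : Fin n, x < x₁ → γ₂ x = γ' x := by
    intro x hx
    funext b
    rw [hMrow x b (ne_of_lt hx) (ne_of_lt (lt_trans hx hx12))]
    rw [hrowlt x hx]
  have hx₁le : x₁ ≤ x₁' := by
    by_contra hcon
    push_neg at hcon
    exact hx₁'ne (hrow2 x₁' hcon)
  obtain ⟨_, hTex₂⟩ := exists_lt_of_row_ne hγ₂coup ⟨h0', h1', h2'⟩ x₁' hx₁'ne
  have hT₂ : (univ.filter fun y : Fin n => γ₂ x₁' y < γ' x₁' y).Nonempty := by
    obtain ⟨y, hy⟩ := hTex₂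
    exact ⟨y, by simp [hy]⟩
  have hmeasγ₂ : meas γ' γ₂ = ((n - (x₁' : ℕ)) * (n+1)
      + (univ.filter fun y : Fin n => γ₂ x₁' y ≠ γ' x₁' y).card) * (n+1)
      + (univ.filter fun x : Fin n => x ≠ x₁'
          ∧ 0 < γ₂ x ((univ.filter fun y : Fin n => γ₂ x₁' y < γ' x₁' y).min' hT₂)).card + 1 :=
    meas_pos_eq γ' γ₂ hS₂ hT₂
  rw [hmeasγ, hmeasγ₂]
  rcases lt_or_eq_of_le hx₁le with hlt | heq
  · apply lex3 (card_filter_le_n _) (card_filter_le_n _)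
    left
    have h1n : (x₁ : ℕ) < n := x₁.isLt
    have h2n : (x₁ : ℕ) < (x₁' : ℕ) := Fin.lt_def.mp hlt
    omega
  -- x₁' = x₁ case
  have hD2D : (univ.filter fun y : Fin n => γ₂ x₁' y ≠ γ' x₁' y)
      ⊆ (univ.filter fun y : Fin n => γ x₁ y ≠ γ' x₁ y) := by
    intro y hy
    rw [mem_filter] at hy ⊢
    refine ⟨mem_univ y, ?_⟩
    rw [← heq] at hy
    by_cases hyy1 : y = y₁
    · rw [hyy1]
      exact ne_of_gt hy₁
    · by_cases hyy2 : y = y₂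
      · rw [hyy2]
        exact ne_of_lt hy₂
      · rw [← hMcol x₁ y hyy1 hyy2]
        exact hy.2
  by_cases hB : γ₂ x₁ y₁ = γ' x₁ y₁ ∨ γ₂ x₁ y₂ = γ' x₁ y₂
  · -- a discrepancy in row x₁ is resolved
    have hssub : (univ.filter fun y : Fin n => γ₂ x₁' y ≠ γ' x₁' y)
        ⊂ (univ.filter fun y : Fin n => γ x₁ y ≠ γ' x₁ y) := by
      rw [Finset.ssubset_iff_of_subset hD2D]
      rcases hB with hB | hB
      · refine ⟨y₁, by simp [ne_of_gt hy₁], ?_⟩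
        rw [mem_filter]
        push_neg
        intro _
        rw [← heq]
        exact hB
      · refine ⟨y₂, by simp [ne_of_lt hy₂], ?_⟩
        rw [mem_filter]
        push_neg
        intro _
        rw [← heq]
        exact hB
    apply lex3 (card_filter_le_n _) (card_filter_le_n _)
    right; left
    exact ⟨by rw [heq], Finset.card_lt_card hssub⟩
  -- both remain discrepant : α = γ x₂ y₂
  push_neg at hB
  have hα1 : α < g₁ := by
    rcases lt_or_eq_of_le hαg₁ with h | h
    · exact h
    · exfalso
      apply hB.1
      rw [hv11, h, hg₁]
      ring
  have hα2 : α < g₂ := by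
    rcases lt_or_eq_of_le hαg₂ with h | h
    · exact h
    · exfalso
      apply hB.2
      rw [hv12, h, hg₂]
      ring
  have hαeqc : α = γ x₂ y₂ := by
    rcases min_choice g₁ (min g₂ (γ x₂ y₂)) with h | h
    · exfalso; rw [← hαdef] at h; exact absurd h (ne_of_lt hα1)
    · rw [← hαdef] at h
      rcases min_choice g₂ (γ x₂ y₂) with h' | h'
      · exfalso; rw [h'] at h; exact absurd h (ne_of_lt hα2)
      · rw [h'] at h; exact h
  have hz : γ₂ x₂ y₂ = 0 := by
    rw [hv22, hαeqc, sub_self]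
  have hTT : (univ.filter fun y : Fin n => γ₂ x₁' y < γ' x₁' y) = T := by
    rw [hTdef]
    ext y
    simp only [mem_filter, mem_univ, true_and]
    rw [← heq]
    by_cases hyy1 : y = y₁
    · rw [hyy1]
      constructor
      · intro h
        exfalso
        rw [hv11] at h
        rw [hg₁] at hα1
        linarith
      · intro h
        exfalso
        linarith
    · by_cases hyy2 : y = y₂
      · rw [hyy2]
        constructor
        · intro _
          exact hy₂
        · intro _
          rw [hv12]
          rw [hg₂] at hα2
          linarith
      · rw [hMcol x₁ y hyy1 hyy2]
  have hmin2 : (univ.filter fun y : Fin n => γ₂ x₁' y < γ' x₁' y).min' hT₂ = y₂ := by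
    apply le_antisymm
    · apply Finset.min'_le
      rw [hTT]
      exact hy₂in
    · rw [hy₂def]
      exact Finset.min'_le T _ (hTT ▸ Finset.min'_mem _ hT₂)
  have hCnew : (univ.filter fun x : Fin n => x ≠ x₁'
      ∧ 0 < γ₂ x ((univ.filter fun y : Fin n => γ₂ x₁' y < γ' x₁' y).min' hT₂))
      = univ.filter fun x : Fin n => x ≠ x₁ ∧ 0 < γ₂ x y₂ := by
    rw [hmin2, ← heq]
  have hCsub : (univ.filter fun x : Fin n => x ≠ x₁ ∧ 0 < γ₂ x y₂)
      ⊂ univ.filter fun x : Fin n => x ≠ x₁ ∧ 0 < γ x y₂ := by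
    rw [Finset.ssubset_iff_of_subset]
    · refine ⟨x₂, ?_, ?_⟩
      · rw [mem_filter]
        exact ⟨mem_univ _, Ne.symm hx₁x₂, hc0⟩
      · rw [mem_filter]
        push_neg
        intro _ _
        rw [hz]
    · intro x hx
      rw [mem_filter] at hx ⊢
      obtain ⟨_, hx1, hxpos⟩ := hx
      refine ⟨mem_univ _, hx1, ?_⟩
      by_cases hxx2 : x = x₂
      · exfalso
        rw [hxx2, hz] at hxpos
        exact lt_irrefl 0 hxpos
      · rw [← hMrow x y₂ hx1 hxx2]
        exact hxpos
  apply lex3 (card_filter_le_n _) (card_filter_le_n _)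
  right; right
  refine ⟨by rw [heq], Finset.card_le_card hD2D, ?_⟩
  rw [hCnew]
  exact Finset.card_lt_card hCsub


theorem chain_of_couplings {μ ν : Fin n → ℝ} {γ γ' : Fin n → Fin n → ℝ}
    (hγ : IsCoupling μ ν γ) (hγ' : IsCoupling μ ν γ') : Chain μ ν γ γ' := by
  generalize hN : meas γ' γ = N
  induction N using Nat.strong_induction_on generalizing γ with
  | _ N ih =>
  by_cases hne : γ = γ'
  · subst hne
    exact Chain.refl γ hγ
  · obtain ⟨M, α, hM, hα, hcoup, hdec⟩ := exists_step hγ hγ' hne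
    subst hN
    exact Chain.step M α hM hα hγ (fun a b => rfl)
      (ih (meas γ' (fun a b => γ a b - α * M a b)) hdec hcoup rfl)



lemma filter_lt_succ (i : Fin n) :
    univ.filter (fun h : Fin n => (h : ℕ) < (i : ℕ) + 1)
      = insert i (univ.filter fun h : Fin n => (h : ℕ) < (i : ℕ)) := by
  ext h
  simp only [mem_filter, mem_univ, true_and, mem_insert, Fin.ext_iff]
  omega

lemma sum_step (f : Fin n → ℝ) (i : Fin n) :
    ∑ h ∈ univ.filter (fun h : Fin n => (h : ℕ) < (i : ℕ) + 1), f h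
      = (∑ h ∈ univ.filter (fun h : Fin n => (h : ℕ) < (i : ℕ)), f h) + f i := by
  rw [filter_lt_succ, Finset.sum_insert (by simp)]
  ring

lemma filter_lt_zero :
    univ.filter (fun h : Fin n => (h : ℕ) < 0) = (∅ : Finset (Fin n)) := by
  simp

lemma filter_lt_n :
    univ.filter (fun h : Fin n => (h : ℕ) < n) = (univ : Finset (Fin n)) := by
  apply Finset.filter_true_of_mem
  intro h _
  exact h.isLt

def Fc (γH : Fin n → Fin n → ℝ) (i j : ℕ) : ℝ :=
  ∑ h ∈ univ.filter (fun h : Fin n => (h : ℕ) < i),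
    ∑ k ∈ univ.filter (fun k : Fin n => (k : ℕ) < j), γH h k

def Mc (μ : Fin n → ℝ) (i : ℕ) : ℝ :=
  ∑ h ∈ univ.filter (fun h : Fin n => (h : ℕ) < i), μ h

lemma minkey (A B x y : ℝ) (hx : 0 ≤ x) (hy : 0 ≤ y) :
    min (x + min A (B + y)) (y + min (A + x) B) = min (A + x) (B + y) := by
  apply le_antisymm
  · apply le_min
    · calc min (x + min A (B+y)) (y + min (A+x) B) ≤ x + min A (B+y) := min_le_left _ _
        _ ≤ A + x := by linarith [min_le_left A (B+y)]
    · calc min (x + min A (B+y)) (y + min (A+x) B) ≤ y + min (A+x) B := min_le_right _ _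
        _ ≤ B + y := by linarith [min_le_right (A+x) B]
  · apply le_min
    · rcases le_total A (B+y) with h | h
      · rw [min_eq_left h]
        linarith [min_le_left (A+x) (B+y)]
      · rw [min_eq_right h]
        linarith [min_le_right (A+x) (B+y)]
    · rcases le_total (A+x) B with h | h
      · rw [min_eq_left h]
        linarith [min_le_left (A+x) (B+y)]
      · rw [min_eq_right h]
        linarith [min_le_right (A+x) (B+y)]

lemma add_min_helper (A r c x y : ℝ) :
    A + r + min (x - r) (y - c) = min (x + A) (y + (A + r - c)) := by
  rcases le_total (x - r) (y - c) with h | h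
  · rw [min_eq_left h, min_eq_left (by linarith)]
    ring
  · rw [min_eq_right h, min_eq_right (by linarith)]
    ring

theorem gammaH_isCoupling {μ ν : Fin n → ℝ}
    (hμ0 : ∀ i, 0 ≤ μ i) (hμ1 : ∑ i, μ i = 1)
    (hν0 : ∀ j, 0 ≤ ν j) (hν1 : ∑ j, ν j = 1)
    (γH : Fin n → Fin n → ℝ)
    (hγH : ∀ i j, γH i j =
      min (μ i - ∑ k ∈ Finset.univ.filter (fun k => k < j), γH i k)
          (ν j - ∑ h ∈ Finset.univ.filter (fun h => h < i), γH h j)) :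
    IsCoupling μ ν γH := by
  have hγH' : ∀ i j : Fin n, γH i j =
      min (μ i - ∑ k ∈ univ.filter (fun k : Fin n => (k : ℕ) < (j : ℕ)), γH i k)
          (ν j - ∑ h ∈ univ.filter (fun h : Fin n => (h : ℕ) < (i : ℕ)), γH h j) := by
    intro i j
    rw [hγH i j]
    have e1 : Finset.univ.filter (fun k : Fin n => k < j)
        = univ.filter (fun k : Fin n => (k : ℕ) < (j : ℕ)) := by
      apply Finset.filter_congr
      intro x _
      exact Fin.lt_def
    have e2 : Finset.univ.filter (fun h : Fin n => h < i)
        = univ.filter (fun h : Fin n => (h : ℕ) < (i : ℕ)) := by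
      apply Finset.filter_congr
      intro x _
      exact Fin.lt_def
    rw [e1, e2]
  -- basic Fc facts
  have hF0j : ∀ j, Fc γH 0 j = 0 := by
    intro j
    rw [Fc, filter_lt_zero, Finset.sum_empty]
  have hFi0 : ∀ i, Fc γH i 0 = 0 := by
    intro i
    rw [Fc]
    apply Finset.sum_eq_zero
    intro h _
    rw [filter_lt_zero, Finset.sum_empty]
  have hFrow : ∀ (i : Fin n) (j : ℕ), Fc γH ((i : ℕ) + 1) j
      = Fc γH i j + ∑ k ∈ univ.filter (fun k : Fin n => (k : ℕ) < j), γH i k := by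
    intro i j
    rw [Fc, Fc, sum_step (fun h => ∑ k ∈ univ.filter (fun k : Fin n => (k : ℕ) < j), γH h k) i]
  have hFcol : ∀ (i : ℕ) (j : Fin n), Fc γH i ((j : ℕ) + 1)
      = Fc γH i j + ∑ h ∈ univ.filter (fun h : Fin n => (h : ℕ) < i), γH h j := by
    intro i j
    rw [Fc, Fc, ← Finset.sum_add_distrib]
    apply Finset.sum_congr rfl
    intro h _
    rw [sum_step (fun k => γH h k) j]
  have hFrec : ∀ (i j : Fin n), Fc γH ((i : ℕ) + 1) ((j : ℕ) + 1)
      = min (μ i + Fc γH i ((j : ℕ) + 1)) (ν j + Fc γH ((i : ℕ) + 1) j) := by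
    intro i j
    have e1 : Fc γH ((i : ℕ) + 1) ((j : ℕ) + 1)
        = Fc γH i ((j : ℕ) + 1)
          + (∑ k ∈ univ.filter (fun k : Fin n => (k : ℕ) < (j : ℕ)), γH i k) + γH i j := by
      rw [hFrow i ((j : ℕ) + 1), sum_step (fun k => γH i k) j]
      ring
    rw [e1, hγH' i j, add_min_helper]
    congr 1
    have h1 := hFcol (i : ℕ) j
    have h2 := hFrow i (j : ℕ)
    linarith
  -- cumulative characterization
  have hMc0 : ∀ i, 0 ≤ Mc μ i := fun i => Finset.sum_nonneg (fun h _ => hμ0 h)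
  have hNc0 : ∀ j, 0 ≤ Mc ν j := fun j => Finset.sum_nonneg (fun h _ => hν0 h)
  have hFmin : ∀ i ≤ n, ∀ j ≤ n, Fc γH i j = min (Mc μ i) (Mc ν j) := by
    intro i
    induction i with
    | zero =>
        intro _ j _
        rw [hF0j]
        have : Mc μ 0 = 0 := by rw [Mc, filter_lt_zero, Finset.sum_empty]
        rw [this, min_eq_left (hNc0 j)]
    | succ i ih =>
        intro hi1 j
        induction j with
        | zero =>
            intro _
            rw [hFi0]
            have : Mc ν 0 = 0 := by rw [Mc, filter_lt_zero, Finset.sum_empty]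
            rw [this, min_eq_right (hMc0 _)]
        | succ j ihj =>
            intro hj1
            have hi : i < n := by omega
            have hj : j < n := by omega
            set iF : Fin n := ⟨i, hi⟩ with hiF
            set jF : Fin n := ⟨j, hj⟩ with hjF
            have e := hFrec iF jF
            simp only [hiF, hjF] at e
            rw [e]
            rw [ih (by omega) (j+1) hj1, ihj (by omega)]
            have eM : Mc μ (i+1) = Mc μ i + μ iF := sum_step μ iF
            have eN : Mc ν (j+1) = Mc ν j + ν jF := sum_step ν jF
            rw [eM, eN]
            exact minkey (Mc μ i) (Mc ν j) (μ iF) (ν jF) (hμ0 iF) (hν0 jF)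
  have hMc1 : Mc μ n = 1 := by rw [Mc, filter_lt_n]; exact hμ1
  have hNc1 : Mc ν n = 1 := by rw [Mc, filter_lt_n]; exact hν1
  have hMcle : ∀ i ≤ n, Mc μ i ≤ 1 := by
    intro i hi
    rw [← hMc1, Mc, Mc]
    apply Finset.sum_le_sum_of_subset_of_nonneg
    · intro x hx
      simp only [mem_filter, mem_univ, true_and] at hx ⊢
      omega
    · intro x _ _
      exact hμ0 x
  have hNcle : ∀ j ≤ n, Mc ν j ≤ 1 := by
    intro j hj
    rw [← hNc1, Mc, Mc]
    apply Finset.sum_le_sum_of_subset_of_nonneg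
    · intro x hx
      simp only [mem_filter, mem_univ, true_and] at hx ⊢
      omega
    · intro x _ _
      exact hν0 x
  -- row partial sums
  have hrowpart : ∀ (i : Fin n) (j : ℕ), j ≤ n →
      ∑ k ∈ univ.filter (fun k : Fin n => (k : ℕ) < j), γH i k
        = min (Mc μ ((i : ℕ) + 1)) (Mc ν j) - min (Mc μ (i : ℕ)) (Mc ν j) := by
    intro i j hj
    have := hFrow i j
    rw [hFmin ((i : ℕ) + 1) i.isLt j hj, hFmin (i : ℕ) (le_of_lt i.isLt) j hj] at this
    linarith
  have hcolpart : ∀ (j : Fin n) (i : ℕ), i ≤ n →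
      ∑ h ∈ univ.filter (fun h : Fin n => (h : ℕ) < i), γH h j
        = min (Mc μ i) (Mc ν ((j : ℕ) + 1)) - min (Mc μ i) (Mc ν (j : ℕ)) := by
    intro j i hi
    have := hFcol i j
    rw [hFmin i hi ((j : ℕ) + 1) j.isLt, hFmin i hi (j : ℕ) (le_of_lt j.isLt)] at this
    linarith
  refine ⟨?_, ?_, ?_⟩
  · -- nonnegativity
    intro i j
    rw [hγH' i j]
    apply le_min
    · rw [hrowpart i (j : ℕ) (le_of_lt j.isLt)]
      have e := sum_step μ i
      have hMono : min (Mc μ ((i:ℕ)+1)) (Mc ν (j:ℕ)) ≤ min (Mc μ (i:ℕ)) (Mc ν (j:ℕ)) + μ i := by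
        rcases le_total (Mc μ (i:ℕ)) (Mc ν (j:ℕ)) with h | h
        · rw [min_eq_left h]
          have : Mc μ ((i:ℕ)+1) = Mc μ (i:ℕ) + μ i := sum_step μ i
          linarith [min_le_left (Mc μ ((i:ℕ)+1)) (Mc ν (j:ℕ))]
        · rw [min_eq_right h]
          linarith [min_le_right (Mc μ ((i:ℕ)+1)) (Mc ν (j:ℕ)), hμ0 i]
      linarith
    · rw [hcolpart j (i : ℕ) (le_of_lt i.isLt)]
      have hMono : min (Mc μ (i:ℕ)) (Mc ν ((j:ℕ)+1)) ≤ min (Mc μ (i:ℕ)) (Mc ν (j:ℕ)) + ν j := by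
        rcases le_total (Mc ν (j:ℕ)) (Mc μ (i:ℕ)) with h | h
        · rw [min_eq_right h]
          have : Mc ν ((j:ℕ)+1) = Mc ν (j:ℕ) + ν j := sum_step ν j
          linarith [min_le_right (Mc μ (i:ℕ)) (Mc ν ((j:ℕ)+1))]
        · rw [min_eq_left h]
          linarith [min_le_left (Mc μ (i:ℕ)) (Mc ν ((j:ℕ)+1)), hν0 j]
      linarith
  · -- row sums
    intro i
    have : ∑ y, γH i y = ∑ k ∈ univ.filter (fun k : Fin n => (k : ℕ) < n), γH i k := by
      rw [filter_lt_n]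
    rw [this, hrowpart i n le_rfl, hNc1,
      min_eq_left (hMcle ((i : ℕ) + 1) i.isLt), min_eq_left (hMcle (i : ℕ) (le_of_lt i.isLt))]
    have e : Mc μ ((i : ℕ) + 1) = Mc μ (i : ℕ) + μ i := sum_step μ i
    linarith
  · -- column sums
    intro j
    have : ∑ x, γH x j = ∑ h ∈ univ.filter (fun h : Fin n => (h : ℕ) < n), γH h j := by
      rw [filter_lt_n]
    rw [this, hcolpart j n le_rfl, hMc1,
      min_eq_right (hNcle ((j : ℕ) + 1) j.isLt), min_eq_right (hNcle (j : ℕ) (le_of_lt j.isLt))]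
    have e : Mc ν ((j : ℕ) + 1) = Mc ν (j : ℕ) + ν j := sum_step ν j
    linarith


end CouplingPath

/-- Any coupling can be moved to the homophily coupling `γ_H` by a finite
sequence of basic moves with positive coefficients, all partial sums staying in
`P(μ, ν)`; consequently any two couplings in `P(μ, ν)` are connected by a path
of basic moves staying inside `P(μ, ν)`. -/
theorem couplings_connected_by_basic_moves
    (n : ℕ) (μ ν : Fin n → ℝ)
    (hμ0 : ∀ i, 0 ≤ μ i) (hμ1 : ∑ i, μ i = 1)
    (hν0 : ∀ j, 0 ≤ ν j) (hν1 : ∑ j, ν j = 1)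
    (γH : Fin n → Fin n → ℝ)
    (hγH : ∀ i j, γH i j =
      min (μ i - ∑ k ∈ Finset.univ.filter (fun k => k < j), γH i k)
          (ν j - ∑ h ∈ Finset.univ.filter (fun h => h < i), γH h j))
    (γ : Fin n → Fin n → ℝ) (hγ : IsCoupling μ ν γ) :
    (∃ (k : ℕ) (M : Fin k → Fin n → Fin n → ℝ) (α : Fin k → ℝ),
      (∀ i, IsBasicMove (M i)) ∧ (∀ i, 0 < α i) ∧
      (∀ m : ℕ, m ≤ k → IsCoupling μ ν
        (fun a b => γ a b - ∑ i ∈ Finset.univ.filter (fun i : Fin k => (i : ℕ) < m),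
          α i * M i a b)) ∧
      (∀ a b, γH a b = γ a b - ∑ i, α i * M i a b)) ∧
    (∀ γ' : Fin n → Fin n → ℝ, IsCoupling μ ν γ' →
      ∃ (k : ℕ) (M : Fin k → Fin n → Fin n → ℝ) (α : Fin k → ℝ),
        (∀ i, IsBasicMove (M i)) ∧ (∀ i, 0 < α i) ∧
        (∀ m : ℕ, m ≤ k → IsCoupling μ ν
          (fun a b => γ a b - ∑ i ∈ Finset.univ.filter (fun i : Fin k => (i : ℕ) < m),
            α i * M i a b)) ∧
        (∀ a b, γ' a b = γ a b - ∑ i, α i * M i a b)) := by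
  have hγHc : IsCoupling μ ν γH :=
    CouplingPath.gammaH_isCoupling hμ0 hμ1 hν0 hν1 γH hγH
  constructor
  · exact CouplingPath.chain_movesTo (CouplingPath.chain_of_couplings hγ hγHc)
  · intro γ' hγ'
    exact CouplingPath.chain_movesTo (CouplingPath.chain_of_couplings hγ hγ')
end

section
/- If d is a distance on X, μ(x̄)ν(x̄) > 0 for some x̄ ∈ X, and γ̃ is an optimal coupling for K_d(μ, ν) with γ̃(x̄, x̄) = 0, then there exists an optimal coupling γ̄ with γ̄(x̄, x̄) > 0 and γ̄(x, x) = γ̃(x, x) for all x ≠ x̄. -/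
set_option maxHeartbeats 1000000

/-- If `μ(x̄)ν(x̄) > 0` and `γ̃` is an optimal coupling with `γ̃(x̄,x̄) = 0`, then
there is an optimal coupling `γ̄` with `γ̄(x̄,x̄) > 0` and the same other diagonal
entries. -/
theorem optimal_coupling_positive_diagonal
    {X : Type*} [Fintype X] (d : X → X → ℝ)
    (hd_eq : ∀ x y, d x y = 0 ↔ x = y)
    (hd_symm : ∀ x y, d x y = d y x)
    (hd_tri : ∀ x y z, d x z ≤ d x y + d y z)
    (μ ν : X → ℝ)
    (hμ0 : ∀ x, 0 ≤ μ x) (hμ1 : ∑ x, μ x = 1)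
    (hν0 : ∀ x, 0 ≤ ν x) (hν1 : ∑ x, ν x = 1)
    (x₀ : X) (hx₀ : 0 < μ x₀ * ν x₀)
    (γ : X → X → ℝ) (hγ : IsCoupling μ ν γ)
    (hγopt : ∑ x, ∑ y, d x y * γ x y = Kd d μ ν)
    (hdiag : γ x₀ x₀ = 0) :
    ∃ γ' : X → X → ℝ, IsCoupling μ ν γ' ∧
      (∑ x, ∑ y, d x y * γ' x y = Kd d μ ν) ∧
      0 < γ' x₀ x₀ ∧ ∀ x, x ≠ x₀ → γ' x x = γ x x := by
  classical
  obtain ⟨hpos, hrow, hcol⟩ := hγ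
  have hd0 : ∀ x y, 0 ≤ d x y := by
    intro x y
    have h1 : d x x = 0 := (hd_eq x x).mpr rfl
    have h2 := hd_tri x y x
    rw [h1, hd_symm y x] at h2
    linarith
  -- μ x₀ > 0 and ν x₀ > 0
  have hμx : 0 < μ x₀ := by
    rcases (hμ0 x₀).lt_or_eq with h | h
    · exact h
    · exfalso; rw [← h] at hx₀; simp at hx₀
  have hνx : 0 < ν x₀ := by
    rcases (hν0 x₀).lt_or_eq with h | h
    · exact h
    · exfalso; rw [← h] at hx₀; simp at hx₀
  -- find b and a
  have hb : ∃ b, b ≠ x₀ ∧ 0 < γ x₀ b := by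
    by_contra h
    push_neg at h
    have hz : ∀ y, γ x₀ y = 0 := by
      intro y
      by_cases hy : y = x₀
      · rw [hy]; exact hdiag
      · exact le_antisymm (h y hy) (hpos _ _)
    have := hrow x₀
    simp only [hz, Finset.sum_const_zero] at this
    linarith
  have ha : ∃ a, a ≠ x₀ ∧ 0 < γ a x₀ := by
    by_contra h
    push_neg at h
    have hz : ∀ x, γ x x₀ = 0 := by
      intro x
      by_cases hx : x = x₀
      · rw [hx]; exact hdiag
      · exact le_antisymm (h x hx) (hpos _ _)
    have := hcol x₀
    simp only [hz, Finset.sum_const_zero] at this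
    linarith
  obtain ⟨b, hbx, hbpos⟩ := hb
  obtain ⟨a, hax, hapos⟩ := ha
  set ε := min (γ x₀ b) (γ a x₀) with hεdef
  have hε : 0 < ε := lt_min hbpos hapos
  have hε1 : ε ≤ γ x₀ b := min_le_left _ _
  have hε2 : ε ≤ γ a x₀ := min_le_right _ _
  set f : X → X → ℝ := fun x y =>
    (if x = x₀ ∧ y = x₀ then 1 else 0) + (if x = a ∧ y = b then 1 else 0)
      - (if x = x₀ ∧ y = b then 1 else 0) - (if x = a ∧ y = x₀ then 1 else 0) with hfdef
  set γ' : X → X → ℝ := fun x y => γ x y + ε * f x y with hγ'def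
  -- nonnegativity
  have hpos' : ∀ x y, 0 ≤ γ' x y := by
    intro x y
    simp only [hγ'def, hfdef]
    by_cases h1 : x = x₀ <;> by_cases h2 : y = x₀ <;> by_cases h3 : x = a <;>
      by_cases h4 : y = b <;>
      simp_all <;> nlinarith [hpos x y, hpos x₀ b, hpos a x₀, hpos a b, lt_min hbpos hapos,
        min_le_left (γ x₀ b) (γ a x₀), min_le_right (γ x₀ b) (γ a x₀)]
  -- row sums of f vanish
  have hfrow : ∀ x, ∑ y, f x y = 0 := by
    intro x
    simp only [hfdef]
    simp only [Finset.sum_sub_distrib, Finset.sum_add_distrib, ite_and]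
    simp [Finset.sum_ite_eq']
  have hfcol : ∀ y, ∑ x, f x y = 0 := by
    intro y
    simp only [hfdef]
    simp only [Finset.sum_sub_distrib, Finset.sum_add_distrib, ite_and]
    simp [Finset.sum_ite_eq']
  have hrow' : ∀ x, ∑ y, γ' x y = μ x := by
    intro x
    simp only [hγ'def]
    rw [Finset.sum_add_distrib, ← Finset.mul_sum, hfrow, hrow]
    ring
  have hcol' : ∀ y, ∑ x, γ' x y = ν y := by
    intro y
    simp only [hγ'def]
    rw [Finset.sum_add_distrib, ← Finset.mul_sum, hfcol, hcol]
    ring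
  have hcoup' : IsCoupling μ ν γ' := ⟨hpos', hrow', hcol'⟩
  -- cost of γ'
  have hdxx : d x₀ x₀ = 0 := (hd_eq x₀ x₀).mpr rfl
  have hcost : ∑ x, ∑ y, d x y * γ' x y
      = (∑ x, ∑ y, d x y * γ x y) + ε * (d a b - d x₀ b - d a x₀) := by
    have : ∀ x, ∑ y, d x y * γ' x y
        = (∑ y, d x y * γ x y) + ε * (∑ y, d x y * f x y) := by
      intro x
      simp only [hγ'def]
      rw [Finset.mul_sum, ← Finset.sum_add_distrib]
      exact Finset.sum_congr rfl fun y _ => by ring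
    rw [Finset.sum_congr rfl fun x _ => this x, Finset.sum_add_distrib,
      ← Finset.mul_sum]
    congr 1
    congr 1
    have : ∀ x, ∑ y, d x y * f x y
        = (if x = x₀ then d x x₀ else 0) + (if x = a then d x b else 0)
          - (if x = x₀ then d x b else 0) - (if x = a then d x x₀ else 0) := by
      intro x
      simp only [hfdef]
      have : ∀ y, d x y * ((if x = x₀ ∧ y = x₀ then (1:ℝ) else 0) + (if x = a ∧ y = b then 1 else 0)
          - (if x = x₀ ∧ y = b then 1 else 0) - (if x = a ∧ y = x₀ then 1 else 0))
        = (if y = x₀ then (if x = x₀ then d x y else 0) else 0)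
          + (if y = b then (if x = a then d x y else 0) else 0)
          - (if y = b then (if x = x₀ then d x y else 0) else 0)
          - (if y = x₀ then (if x = a then d x y else 0) else 0) := by
        intro y
        by_cases h1 : x = x₀ <;> by_cases h2 : y = x₀ <;> by_cases h3 : x = a <;>
          by_cases h4 : y = b <;>
          simp [h1, h2, h3, h4, hbx, hax, Ne.symm hbx, Ne.symm hax] <;> ring
      rw [Finset.sum_congr rfl fun y _ => this y]
      simp only [Finset.sum_sub_distrib, Finset.sum_add_distrib]
      simp [Finset.sum_ite_eq']
    rw [Finset.sum_congr rfl fun x _ => this x]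
    simp only [Finset.sum_sub_distrib, Finset.sum_add_distrib]
    simp only [Finset.sum_ite_eq', Finset.mem_univ, if_true]
    rw [hdxx]
    ring
  -- Kd ≤ cost γ'
  have hbdd : BddBelow {r | ∃ g, IsCoupling μ ν g ∧ r = ∑ x, ∑ y, d x y * g x y} := by
    refine ⟨0, ?_⟩
    rintro r ⟨g, ⟨hg0, _, _⟩, rfl⟩
    apply Finset.sum_nonneg
    intro x _
    apply Finset.sum_nonneg
    intro y _
    exact mul_nonneg (hd0 x y) (hg0 x y)
  have hle : Kd d μ ν ≤ ∑ x, ∑ y, d x y * γ' x y :=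
    csInf_le hbdd ⟨γ', hcoup', rfl⟩
  have hge : ∑ x, ∑ y, d x y * γ' x y ≤ Kd d μ ν := by
    rw [hcost, hγopt]
    have htri := hd_tri a x₀ b
    nlinarith
  have hopt' : ∑ x, ∑ y, d x y * γ' x y = Kd d μ ν := le_antisymm hge hle
  -- from equality: d a b = d x₀ b + d a x₀, hence a ≠ b
  have heq : d a b = d x₀ b + d a x₀ := by
    have := hopt'
    rw [hcost, hγopt] at this
    have h0 : ε * (d a b - d x₀ b - d a x₀) = 0 := by linarith
    have := mul_eq_zero.mp h0
    rcases this with h | h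
    · exact absurd h (ne_of_gt hε)
    · linarith
  have hab : a ≠ b := by
    intro h
    subst h
    rw [(hd_eq a a).mpr rfl, hd_symm x₀ a] at heq
    have hda : d a x₀ ≠ 0 := fun h => hax ((hd_eq a x₀).mp h)
    have := hd0 a x₀
    rcases this.lt_or_eq with h' | h'
    · linarith
    · exact hda h'.symm
  refine ⟨γ', hcoup', hopt', ?_, ?_⟩
  · have h1 : ¬(x₀ = a ∧ x₀ = b) := fun h => hax h.1.symm
    have h2 : ¬(x₀ = x₀ ∧ x₀ = b) := fun h => hbx h.2.symm
    have h3 : ¬(x₀ = a ∧ x₀ = x₀) := fun h => hax h.1.symm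
    have hf : f x₀ x₀ = 1 := by
      simp [hfdef, Ne.symm hbx, Ne.symm hax]
    have : γ' x₀ x₀ = γ x₀ x₀ + ε * f x₀ x₀ := rfl
    rw [this, hf, hdiag]
    simpa using hε
  · intro x hx
    have h1 : ¬(x = x₀ ∧ x = x₀) := fun h => hx h.1
    have h2 : ¬(x = a ∧ x = b) := fun h => hab (h.1.symm.trans h.2)
    have h3 : ¬(x = x₀ ∧ x = b) := fun h => hx h.1
    have h4 : ¬(x = a ∧ x = x₀) := fun h => hx h.2
    have hf : f x x = 0 := by
      simp [hfdef, hx, h2]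
    have : γ' x x = γ x x + ε * f x x := rfl
    rw [this, hf]
    ring
end

section
/- If the support of an optimal coupling γ̃ for K_d(μ, ν) is a disconnected graph with connected components having vertex sets X₁, …, X_k, then μ(X_i) = ν(X_i) for every i, and γ̃ restricted to X_i × X_i, normalized by μ(X_i), is an optimal coupling of the conditional distributions μ|_{X_i} and ν|_{X_i}. -/
/-- If the support of an optimal coupling `γ̃` splits into components with vertex
sets `X₁, …, X_k` (a partition of `X` such that every edge of the support lies
inside a single block), then `μ(X_i) = ν(X_i)` for every `i`, and `γ̃` restricted
to `X_i × X_i` and normalized by `μ(X_i)` is an optimal coupling of the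
conditional distributions `μ|_{X_i}` and `ν|_{X_i}`. -/
theorem optimal_coupling_disconnected_support
    {X : Type*} [Fintype X] [DecidableEq X] (d : X → X → ℝ)
    (hd_eq : ∀ x y, d x y = 0 ↔ x = y)
    (hd_symm : ∀ x y, d x y = d y x)
    (hd_tri : ∀ x y z, d x z ≤ d x y + d y z)
    (μ ν : X → ℝ)
    (hμ0 : ∀ x, 0 ≤ μ x) (hμ1 : ∑ x, μ x = 1)
    (hν0 : ∀ x, 0 ≤ ν x) (hν1 : ∑ x, ν x = 1)
    (γ : X → X → ℝ) (hγ : IsCoupling μ ν γ)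
    (hγopt : ∑ x, ∑ y, d x y * γ x y = Kd d μ ν)
    (k : ℕ) (P : Fin k → Finset X)
    (hcover : ∀ x : X, ∃! i, x ∈ P i)
    (hsupp : ∀ x y, 0 < γ x y → ∃ i, x ∈ P i ∧ y ∈ P i) :
    (∀ i, ∑ x ∈ P i, μ x = ∑ x ∈ P i, ν x) ∧
    (∀ i, 0 < ∑ x ∈ P i, μ x →
      IsCoupling
        (fun x => if x ∈ P i then μ x / (∑ z ∈ P i, μ z) else 0)
        (fun y => if y ∈ P i then ν y / (∑ z ∈ P i, μ z) else 0)
        (fun x y => if x ∈ P i ∧ y ∈ P i then γ x y / (∑ z ∈ P i, μ z) else 0) ∧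
      (∑ x, ∑ y, d x y *
          (if x ∈ P i ∧ y ∈ P i then γ x y / (∑ z ∈ P i, μ z) else 0)) =
        Kd d (fun x => if x ∈ P i then μ x / (∑ z ∈ P i, μ z) else 0)
             (fun y => if y ∈ P i then ν y / (∑ z ∈ P i, μ z) else 0)) := by
  obtain ⟨hγ0, hγrow, hγcol⟩ := hγ
  -- d is nonnegative
  have hd0 : ∀ x y, 0 ≤ d x y := by
    intro x y
    have h1 : d x x ≤ d x y + d y x := hd_tri x y x
    have h2 : d x x = 0 := (hd_eq x x).mpr rfl
    have h3 : d y x = d x y := hd_symm y x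
    nlinarith
  -- γ vanishes off the blocks
  have hz1 : ∀ (i : Fin k) (x y : X), x ∈ P i → y ∉ P i → γ x y = 0 := by
    intro i x y hx hy
    by_contra h
    have hpos : 0 < γ x y := lt_of_le_of_ne (hγ0 x y) (Ne.symm h)
    obtain ⟨j, hxj, hyj⟩ := hsupp x y hpos
    obtain ⟨i0, _, huniq⟩ := hcover x
    have : i = j := (huniq i hx).trans (huniq j hxj).symm
    exact hy (this ▸ hyj)
  have hz2 : ∀ (i : Fin k) (x y : X), x ∉ P i → y ∈ P i → γ x y = 0 := by
    intro i x y hx hy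
    by_contra h
    have hpos : 0 < γ x y := lt_of_le_of_ne (hγ0 x y) (Ne.symm h)
    obtain ⟨j, hxj, hyj⟩ := hsupp x y hpos
    obtain ⟨i0, _, huniq⟩ := hcover y
    have : i = j := (huniq i hy).trans (huniq j hyj).symm
    exact hx (this ▸ hxj)
  -- row / column sums within a block
  have hrow : ∀ (i : Fin k) (x : X), x ∈ P i → ∑ y ∈ P i, γ x y = μ x := by
    intro i x hx
    rw [← hγrow x]
    exact Finset.sum_subset (Finset.subset_univ _) (fun y _ hy => hz1 i x y hx hy)
  have hcol : ∀ (i : Fin k) (y : X), y ∈ P i → ∑ x ∈ P i, γ x y = ν y := by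
    intro i y hy
    rw [← hγcol y]
    exact Finset.sum_subset (Finset.subset_univ _) (fun x _ hx => hz2 i x y hx hy)
  -- Part 1
  have part1 : ∀ i, ∑ x ∈ P i, μ x = ∑ x ∈ P i, ν x := by
    intro i
    calc ∑ x ∈ P i, μ x = ∑ x ∈ P i, ∑ y ∈ P i, γ x y :=
          Finset.sum_congr rfl (fun x hx => (hrow i x hx).symm)
      _ = ∑ y ∈ P i, ∑ x ∈ P i, γ x y := Finset.sum_comm
      _ = ∑ y ∈ P i, ν y := Finset.sum_congr rfl (fun y hy => hcol i y hy)
  refine ⟨part1, ?_⟩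
  intro i hm
  set m : ℝ := ∑ z ∈ P i, μ z with hmdef
  have hmne : m ≠ 0 := ne_of_gt hm
  -- double-ite reduction
  have doubleIte : ∀ f : X → X → ℝ,
      (∑ x, ∑ y, (if x ∈ P i ∧ y ∈ P i then f x y else 0)) =
        ∑ x ∈ P i, ∑ y ∈ P i, f x y := by
    intro f
    have step : ∀ x : X, (∑ y, (if x ∈ P i ∧ y ∈ P i then f x y else 0)) =
        (if x ∈ P i then ∑ y ∈ P i, f x y else 0) := by
      intro x
      by_cases hx : x ∈ P i
      · simp only [hx, true_and, if_true]
        rw [← Finset.sum_filter]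
        congr 1
        simp [Finset.filter_mem_eq_inter]
      · simp [hx]
    rw [Finset.sum_congr rfl (fun x _ => step x), ← Finset.sum_filter]
    congr 1
    simp [Finset.filter_mem_eq_inter]
  -- the restricted normalized coupling
  have hcoup_i : IsCoupling
      (fun x => if x ∈ P i then μ x / m else 0)
      (fun y => if y ∈ P i then ν y / m else 0)
      (fun x y => if x ∈ P i ∧ y ∈ P i then γ x y / m else 0) := by
    refine ⟨?_, ?_, ?_⟩
    · intro x y
      by_cases h : x ∈ P i ∧ y ∈ P i
      · simp only [h, if_true]
        exact div_nonneg (hγ0 x y) (le_of_lt hm)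
      · simp [h]
    · intro x
      by_cases hx : x ∈ P i
      · simp only [hx, true_and, if_true]
        have : ∀ y : X, (if y ∈ P i then γ x y / m else 0) =
            (if y ∈ P i then γ x y else 0) / m := by
          intro y; by_cases hy : y ∈ P i <;> simp [hy]
        rw [Finset.sum_congr rfl (fun y _ => this y), ← Finset.sum_div,
          Finset.sum_ite_mem, Finset.univ_inter, hrow i x hx]
      · simp [hx]
    · intro y
      by_cases hy : y ∈ P i
      · simp only [hy, and_true, if_true]
        have : ∀ x : X, (if x ∈ P i then γ x y / m else 0) =
            (if x ∈ P i then γ x y else 0) / m := by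
          intro x; by_cases hx : x ∈ P i <;> simp [hx]
        rw [Finset.sum_congr rfl (fun x _ => this x), ← Finset.sum_div,
          Finset.sum_ite_mem, Finset.univ_inter, hcol i y hy]
      · simp [hy]
  refine ⟨hcoup_i, ?_⟩
  -- block cost
  set B : ℝ := ∑ x ∈ P i, ∑ y ∈ P i, d x y * γ x y with hBdef
  have hcost_i : (∑ x, ∑ y, d x y * (if x ∈ P i ∧ y ∈ P i then γ x y / m else 0)) = B / m := by
    have : ∀ x y : X, d x y * (if x ∈ P i ∧ y ∈ P i then γ x y / m else 0) =
        (if x ∈ P i ∧ y ∈ P i then d x y * γ x y / m else 0) := by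
      intro x y; by_cases h : x ∈ P i ∧ y ∈ P i <;> simp [h, mul_div_assoc]
    simp_rw [this]
    rw [doubleIte]
    rw [hBdef, Finset.sum_div]
    exact Finset.sum_congr rfl (fun x _ => (Finset.sum_div _ _ _).symm)
  set μi : X → ℝ := fun x => if x ∈ P i then μ x / m else 0 with hμidef
  set νi : X → ℝ := fun y => if y ∈ P i then ν y / m else 0 with hνidef
  set Sset : Set ℝ := {r | ∃ g, IsCoupling μi νi g ∧ r = ∑ x, ∑ y, d x y * g x y}
    with hSsetdef
  have hmem : (B / m) ∈ Sset := by
    refine ⟨fun x y => if x ∈ P i ∧ y ∈ P i then γ x y / m else 0, hcoup_i, hcost_i.symm⟩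
  have hbdd : BddBelow Sset := by
    refine ⟨0, ?_⟩
    rintro r ⟨g, hg, rfl⟩
    apply Finset.sum_nonneg; intro x _
    apply Finset.sum_nonneg; intro y _
    exact mul_nonneg (hd0 x y) (hg.1 x y)
  have hle : Kd d μi νi ≤ B / m := csInf_le hbdd hmem
  have hge : B / m ≤ Kd d μi νi := by
    apply le_csInf ⟨_, hmem⟩
    rintro r ⟨g, ⟨hg0, hgrow, hgcol⟩, rfl⟩
    -- g vanishes off the block
    have hgz1 : ∀ x y : X, x ∉ P i → g x y = 0 := by
      intro x y hx
      have hsum : ∑ y, g x y = 0 := by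
        rw [hgrow x]; simp [hμidef, hx]
      have := (Finset.sum_eq_zero_iff_of_nonneg (fun y _ => hg0 x y)).mp hsum
      exact this y (Finset.mem_univ y)
    have hgz2 : ∀ x y : X, y ∉ P i → g x y = 0 := by
      intro x y hy
      have hsum : ∑ x, g x y = 0 := by
        rw [hgcol y]; simp [hνidef, hy]
      have := (Finset.sum_eq_zero_iff_of_nonneg (fun x _ => hg0 x y)).mp hsum
      exact this x (Finset.mem_univ x)
    -- glued coupling
    set g2 : X → X → ℝ := fun x y => if x ∈ P i ∧ y ∈ P i then m * g x y else γ x y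
      with hg2def
    have hg2coup : IsCoupling μ ν g2 := by
      refine ⟨?_, ?_, ?_⟩
      · intro x y
        by_cases h : x ∈ P i ∧ y ∈ P i
        · simp only [hg2def, h, if_true]
          exact mul_nonneg (le_of_lt hm) (hg0 x y)
        · simp only [hg2def, h, if_false]
          exact hγ0 x y
      · intro x
        by_cases hx : x ∈ P i
        · have : ∀ y : X, g2 x y = m * g x y := by
            intro y
            by_cases hy : y ∈ P i
            · simp [hg2def, hx, hy]
            · simp [hg2def, hx, hy, hz1 i x y hx hy, hgz2 x y hy]
          rw [Finset.sum_congr rfl (fun y _ => this y), ← Finset.mul_sum, hgrow x]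
          simp only [hμidef, hx, if_true]
          field_simp
        · have : ∀ y : X, g2 x y = γ x y := by
            intro y; simp [hg2def, hx]
          rw [Finset.sum_congr rfl (fun y _ => this y), hγrow x]
      · intro y
        by_cases hy : y ∈ P i
        · have : ∀ x : X, g2 x y = m * g x y := by
            intro x
            by_cases hx : x ∈ P i
            · simp [hg2def, hx, hy]
            · simp [hg2def, hx, hy, hz2 i x y hx hy, hgz1 x y hx]
          rw [Finset.sum_congr rfl (fun x _ => this x), ← Finset.mul_sum, hgcol y]
          simp only [hνidef, hy, if_true]
          field_simp
        · have : ∀ x : X, g2 x y = γ x y := by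
            intro x; simp [hg2def, hy]
          rw [Finset.sum_congr rfl (fun x _ => this x), hγcol y]
    -- cost decomposition
    have hcost2 : (∑ x, ∑ y, d x y * g2 x y) =
        (∑ x, ∑ y, d x y * γ x y) - B + m * ∑ x, ∑ y, d x y * g x y := by
      have term : ∀ x y : X, d x y * g2 x y = d x y * γ x y +
          (if x ∈ P i ∧ y ∈ P i then m * (d x y * g x y) - d x y * γ x y else 0) := by
        intro x y
        by_cases h : x ∈ P i ∧ y ∈ P i
        · simp only [hg2def]; rw [if_pos h, if_pos h]; ring
        · simp only [hg2def]; rw [if_neg h, if_neg h]; ring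
      simp_rw [term, Finset.sum_add_distrib]
      rw [doubleIte]
      have hext : (∑ x ∈ P i, ∑ y ∈ P i, d x y * g x y) = ∑ x, ∑ y, d x y * g x y := by
        have inner : ∀ x : X, (∑ y ∈ P i, d x y * g x y) = ∑ y, d x y * g x y := by
          intro x
          exact Finset.sum_subset (Finset.subset_univ _)
            (fun y _ hy => by rw [hgz2 x y hy, mul_zero])
        rw [Finset.sum_congr rfl (fun x _ => inner x)]
        exact Finset.sum_subset (Finset.subset_univ _)
          (fun x _ hx => Finset.sum_eq_zero (fun y _ => by rw [hgz1 x y hx, mul_zero]))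
      have hfull : (∑ x ∈ P i, ∑ y ∈ P i, (m * (d x y * g x y) - d x y * γ x y)) =
          m * (∑ x, ∑ y, d x y * g x y) - B := by
        simp only [Finset.sum_sub_distrib, hBdef]
        rw [← hext, Finset.mul_sum]
        congr 1
        exact Finset.sum_congr rfl (fun x _ => (Finset.mul_sum _ _ _).symm)
      rw [hfull]
      ring
    have hbdd2 : BddBelow {r | ∃ g', IsCoupling μ ν g' ∧ r = ∑ x, ∑ y, d x y * g' x y} := by
      refine ⟨0, ?_⟩
      rintro r ⟨g', hg', rfl⟩
      apply Finset.sum_nonneg; intro x _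
      apply Finset.sum_nonneg; intro y _
      exact mul_nonneg (hd0 x y) (hg'.1 x y)
    have hKle : Kd d μ ν ≤ ∑ x, ∑ y, d x y * g2 x y :=
      csInf_le hbdd2 ⟨g2, hg2coup, rfl⟩
    rw [hcost2, ← hγopt] at hKle
    rw [div_le_iff₀ hm]
    linarith
  -- conclude
  rw [hcost_i]
  exact le_antisymm hge hle
end
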